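/- arXiv:2203.12413 — 7 statements merged into one kernel-verified Lean document; each statement's English description precedes it below -/
import Mathlib

section
/- (Holant theorem.) Let a factor graph be given. Suppose that for every edge (i,a) ∈ E a finite set Y_{i,a} with |Y_{i,a}| = |X_i| is given, together with real matrices φ_{i,a} ∈ ℝ^{X_i×Y_{i,a}} and φ̂_{i,a} ∈ ℝ^{Y_{i,a}×X_i} that are two-sided inverses of each other (∑_{y∈Y_{i,a}} φ_{i,a}(x,y)·φ̂_{i,a}(y,x') = δ_{x,x'} for all x,x' ∈ X_i, and ∑_{x∈X_i} φ̂_{i,a}(y,x)·φ_{i,a}(x,y') = δ_{y,y'} for all y,y' ∈ Y_{i,a}). Define f̂_a(y_{∂a,a}) := ∑_{x_{∂a}} f_a(x_{∂a})·∏_{i∈∂a} φ̂_{i,a}(y_{i,a}, x_i) for y_{∂a,a} ∈ ∏_{i∈∂a} Y_{i,a}, and ĥ_i(y_{i,∂i}) := ∑_{x_i∈X_i} ∏_{a∈∂i} φ_{i,a}(x_i, y_{i,a}) for y_{i,∂i} ∈ ∏_{a∈∂i} Y_{i,a}. Then the partition sum satisfies Z = ∑_{y ∈ ∏_{(i,a)∈E}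 Y_{i,a}} ∏_{a∈F} f̂_a(y_{∂a,a}) · ∏_{i∈V} ĥ_i(y_{i,∂i}). -/
open Finset

section Aux

variable {V F : Type} {E : Finset (V × F)}

/-- Reindex edges by their factor endpoint. -/
def eqA (E : Finset (V × F)) : (Σ a : F, {j : V // (j, a) ∈ E}) ≃ {p : V × F // p ∈ E} where
  toFun x := ⟨(x.2.1, x.1), x.2.2⟩
  invFun e := ⟨e.1.2, e.1.1, by cases e with | mk p h => cases p; exact h⟩
  left_inv := by rintro ⟨a, j, h⟩; rfl
  right_inv := by rintro ⟨⟨i, a⟩, h⟩; rfl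

/-- Reindex edges by their variable endpoint. -/
def eqB (E : Finset (V × F)) : (Σ i : V, {c : F // (i, c) ∈ E}) ≃ {p : V × F // p ∈ E} where
  toFun x := ⟨(x.1, x.2.1), x.2.2⟩
  invFun e := ⟨e.1.1, e.1.2, by cases e with | mk p h => cases p; exact h⟩
  left_inv := by rintro ⟨i, c, h⟩; rfl
  right_inv := by rintro ⟨⟨i, a⟩, h⟩; rfl

end Aux

/-- Holant theorem: given, for every edge `(i,a)` of a factor graph, a finite set `Y i a`
with `|Y i a| = |X i|` together with mutually inverse matrices
`φ i a : X i × Y i a → ℝ` and `φh i a : Y i a × X i → ℝ`, the partition sum can be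
computed from the transformed local functions `f̂_a` and the new vertex functions `ĥ_i`. -/
theorem stmt3 {V F : Type} [Fintype V] [Fintype F] [DecidableEq V] [DecidableEq F]
    (E : Finset (V × F)) (X : V → Type)
    [∀ i, Fintype (X i)] [∀ i, DecidableEq (X i)] [∀ i, Nonempty (X i)]
    (f : ∀ a : F, (∀ j : {j : V // (j, a) ∈ E}, X j.1) → ℝ)
    (Y : V → F → Type) [∀ i a, Fintype (Y i a)] [∀ i a, DecidableEq (Y i a)]
    (φ : ∀ (i : V) (a : F), X i → Y i a → ℝ)
    (φh : ∀ (i : V) (a : F), Y i a → X i → ℝ)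
    (hcard : ∀ (i : V) (a : F), (i, a) ∈ E → Fintype.card (Y i a) = Fintype.card (X i))
    (hinv₁ : ∀ (i : V) (a : F), (i, a) ∈ E → ∀ x x' : X i,
      ∑ y : Y i a, φ i a x y * φh i a y x' = if x = x' then 1 else 0)
    (hinv₂ : ∀ (i : V) (a : F), (i, a) ∈ E → ∀ y y' : Y i a,
      ∑ x : X i, φh i a y x * φ i a x y' = if y = y' then 1 else 0) :
    ∑ x : ∀ i : V, X i, ∏ a : F, f a (fun j => x j.1)
      = ∑ yy : ∀ e : {p : V × F // p ∈ E}, Y e.1.1 e.1.2,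
          (∏ a : F,
            ∑ s : ∀ j : {j : V // (j, a) ∈ E}, X j.1,
              f a s * ∏ j : {j : V // (j, a) ∈ E}, φh j.1 a (yy ⟨(j.1, a), j.2⟩) (s j))
          * ∏ i : V,
              ∑ xi : X i, ∏ c : {c : F // (i, c) ∈ E}, φ i c.1 xi (yy ⟨(i, c.1), c.2⟩) := by
  classical
  symm
  calc
    (∑ yy : ∀ e : {p : V × F // p ∈ E}, Y e.1.1 e.1.2,
          (∏ a : F,
            ∑ s : ∀ j : {j : V // (j, a) ∈ E}, X j.1,
              f a s * ∏ j : {j : V // (j, a) ∈ E}, φh j.1 a (yy ⟨(j.1, a), j.2⟩) (s j))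
          * ∏ i : V,
              ∑ xi : X i, ∏ c : {c : F // (i, c) ∈ E}, φ i c.1 xi (yy ⟨(i, c.1), c.2⟩))
      = ∑ yy : ∀ e : {p : V × F // p ∈ E}, Y e.1.1 e.1.2,
          ∑ S : ∀ a : F, ∀ j : {j : V // (j, a) ∈ E}, X j.1,
          ∑ x : ∀ i : V, X i,
            (∏ a : F, (f a (S a) *
                ∏ j : {j : V // (j, a) ∈ E}, φh j.1 a (yy ⟨(j.1, a), j.2⟩) (S a j)))
            * ∏ i : V, ∏ c : {c : F // (i, c) ∈ E}, φ i c.1 (x i) (yy ⟨(i, c.1), c.2⟩) := by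
        refine Finset.sum_congr rfl fun yy _ => ?_
        rw [Fintype.prod_sum, Fintype.prod_sum, Finset.sum_mul_sum]
    _ = ∑ S : ∀ a : F, ∀ j : {j : V // (j, a) ∈ E}, X j.1,
        ∑ x : ∀ i : V, X i,
        ∑ yy : ∀ e : {p : V × F // p ∈ E}, Y e.1.1 e.1.2,
            (∏ a : F, (f a (S a) *
                ∏ j : {j : V // (j, a) ∈ E}, φh j.1 a (yy ⟨(j.1, a), j.2⟩) (S a j)))
            * ∏ i : V, ∏ c : {c : F // (i, c) ∈ E}, φ i c.1 (x i) (yy ⟨(i, c.1), c.2⟩) := by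
        rw [Finset.sum_comm]
        exact Finset.sum_congr rfl fun S _ => Finset.sum_comm
    _ = ∑ S : ∀ a : F, ∀ j : {j : V // (j, a) ∈ E}, X j.1,
        ∑ x : ∀ i : V, X i,
          (∏ a : F, f a (S a)) *
            if (∀ e : {p : V × F // p ∈ E}, x e.1.1 = S e.1.2 ⟨e.1.1, e.2⟩) then 1 else 0 := by
        refine Finset.sum_congr rfl fun S _ => Finset.sum_congr rfl fun x _ => ?_
        have h1 : ∀ yy : ∀ e : {p : V × F // p ∈ E}, Y e.1.1 e.1.2,
            (∏ a : F, ∏ j : {j : V // (j, a) ∈ E}, φh j.1 a (yy ⟨(j.1, a), j.2⟩) (S a j))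
              = ∏ e : {p : V × F // p ∈ E}, φh e.1.1 e.1.2 (yy e) (S e.1.2 ⟨e.1.1, e.2⟩) := by
          intro yy
          have hs := Finset.prod_sigma (univ : Finset F)
            (fun a => (univ : Finset {j : V // (j, a) ∈ E}))
            (fun p => φh p.2.1 p.1 (yy ⟨(p.2.1, p.1), p.2.2⟩) (S p.1 p.2))
          rw [Finset.univ_sigma_univ] at hs
          rw [← hs]
          exact Fintype.prod_equiv (eqA E) _ _ (by rintro ⟨a, j, h⟩; rfl)
        have h2 : ∀ yy : ∀ e : {p : V × F // p ∈ E}, Y e.1.1 e.1.2,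
            (∏ i : V, ∏ c : {c : F // (i, c) ∈ E}, φ i c.1 (x i) (yy ⟨(i, c.1), c.2⟩))
              = ∏ e : {p : V × F // p ∈ E}, φ e.1.1 e.1.2 (x e.1.1) (yy e) := by
          intro yy
          have hs := Finset.prod_sigma (univ : Finset V)
            (fun i => (univ : Finset {c : F // (i, c) ∈ E}))
            (fun p => φ p.1 p.2.1 (x p.1) (yy ⟨(p.1, p.2.1), p.2.2⟩))
          rw [Finset.univ_sigma_univ] at hs
          rw [← hs]
          exact Fintype.prod_equiv (eqB E) _ _ (by rintro ⟨i, c, h⟩; rfl)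
        calc
          (∑ yy : ∀ e : {p : V × F // p ∈ E}, Y e.1.1 e.1.2,
              (∏ a : F, (f a (S a) *
                  ∏ j : {j : V // (j, a) ∈ E}, φh j.1 a (yy ⟨(j.1, a), j.2⟩) (S a j)))
              * ∏ i : V, ∏ c : {c : F // (i, c) ∈ E}, φ i c.1 (x i) (yy ⟨(i, c.1), c.2⟩))
            = (∏ a : F, f a (S a)) *
                ∑ yy : ∀ e : {p : V × F // p ∈ E}, Y e.1.1 e.1.2,
                  ∏ e : {p : V × F // p ∈ E},
                    (φh e.1.1 e.1.2 (yy e) (S e.1.2 ⟨e.1.1, e.2⟩)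
                      * φ e.1.1 e.1.2 (x e.1.1) (yy e)) := by
              rw [Finset.mul_sum]
              refine Finset.sum_congr rfl fun yy _ => ?_
              rw [Finset.prod_mul_distrib, h1 yy, h2 yy, mul_assoc, ← Finset.prod_mul_distrib]
          _ = (∏ a : F, f a (S a)) *
                ∏ e : {p : V × F // p ∈ E},
                  ∑ y : Y e.1.1 e.1.2,
                    (φh e.1.1 e.1.2 y (S e.1.2 ⟨e.1.1, e.2⟩) * φ e.1.1 e.1.2 (x e.1.1) y) := by
              rw [Fintype.prod_sum]
          _ = (∏ a : F, f a (S a)) *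
                if (∀ e : {p : V × F // p ∈ E}, x e.1.1 = S e.1.2 ⟨e.1.1, e.2⟩)
                  then 1 else 0 := by
              rw [← Fintype.prod_boole]
              congr 1
              refine Finset.prod_congr rfl fun e _ => ?_
              have he : (e.1.1, e.1.2) ∈ E := by
                cases e with | mk p h => cases p; exact h
              rw [← hinv₁ e.1.1 e.1.2 he (x e.1.1) (S e.1.2 ⟨e.1.1, e.2⟩)]
              exact Finset.sum_congr rfl fun y _ => mul_comm _ _
    _ = ∑ x : ∀ i : V, X i, ∏ a : F, f a (fun j => x j.1) := by
        rw [Finset.sum_comm]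
        refine Finset.sum_congr rfl fun x _ => ?_
        have hiff : ∀ S : ∀ a : F, ∀ j : {j : V // (j, a) ∈ E}, X j.1,
            (∀ e : {p : V × F // p ∈ E}, x e.1.1 = S e.1.2 ⟨e.1.1, e.2⟩)
              ↔ S = (fun a (j : {j : V // (j, a) ∈ E}) => x j.1) := by
          intro S
          constructor
          · intro h
            funext a j
            exact (h ⟨(j.1, a), j.2⟩).symm
          · rintro rfl e
            rfl
        rw [Finset.sum_congr rfl (fun S _ => by rw [if_congr (hiff S) rfl rfl])]
        simp
end

section
/- Let a factor graph have nonnegative local functions f_a ≥ 0, none identically zero. Let {m_{i→a}, m_{a→i} : X_i → ℝ_{>0}}_{(i,a)∈E} be strictly positive messages forming a BP fixed point: for every (i,a) ∈ E there exist constants γ_{i,a} > 0 and δ_{i,a} > 0 with m_{i→a}(x_i) = γ_{i,a}·∏_{c∈∂i∖{a}} m_{c→i}(x_i) and m_{a→i}(x_i) = δ_{i,a}·∑_{x_{∂a∖{i}}} f_a(x_{∂a})·∏_{j∈∂a∖{i}} m_{j→a}(x_j) for all x_i ∈ X_i. Define Z_a := ∑_{x_{∂a}} f_a(x_{∂a})·∏_{i∈∂a}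 m_{i→a}(x_i), Z_i := ∑_{x_i} ∏_{a∈∂i} m_{a→i}(x_i), Z_{i,a} := ∑_{x_i} m_{i→a}(x_i)·m_{a→i}(x_i), and the beliefs b_a(x_{∂a}) := f_a(x_{∂a})·∏_{i∈∂a} m_{i→a}(x_i)/Z_a and b_i(x_i) := ∏_{a∈∂i} m_{a→i}(x_i)/Z_i. Then the Bethe partition sum satisfies exp(−F_B({b_a},{b_i})) = (∏_{a∈F} Z_a · ∏_{i∈V} Z_i) / ∏_{(i,a)∈E} Z_{i,a}. -/
open Finset

open Classical in
/-- The Bethe free energy of a factor graph at a family of local beliefs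
`{b_a}_{a∈F}, {b_i}_{i∈V}`, valued in `ℝ ∪ {+∞}` (with the conventions of the text);
here `d_i = |∂i|`. -/
noncomputable def betheFE {V F : Type} [Fintype V] [Fintype F] [DecidableEq V] [DecidableEq F]
    (E : Finset (V × F)) (X : V → Type) [∀ i, Fintype (X i)] [∀ i, DecidableEq (X i)]
    (f : ∀ a : F, (∀ j : {j : V // (j, a) ∈ E}, X j.1) → ℝ)
    (bF : ∀ a : F, (∀ j : {j : V // (j, a) ∈ E}, X j.1) → ℝ)
    (bV : ∀ i : V, X i → ℝ) : EReal :=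
  if ∃ (a : F) (s : ∀ j : {j : V // (j, a) ∈ E}, X j.1), 0 < bF a s ∧ f a s = 0 then ⊤
  else
    ((- ∑ a : F, ∑ s : ∀ j : {j : V // (j, a) ∈ E}, X j.1, bF a s * Real.log (f a s)
        + ∑ a : F, ∑ s : ∀ j : {j : V // (j, a) ∈ E}, X j.1, bF a s * Real.log (bF a s)
        - ∑ i : V, ((Fintype.card {c : F // (i, c) ∈ E} : ℝ) - 1)
            * ∑ xi : X i, bV i xi * Real.log (bV i xi) : ℝ) : EReal)

/-- reindex edge sums by factor -/
def edgeEquivF {V F : Type} (E : Finset (V × F)) :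
    {p : V × F // p ∈ E} ≃ Σ a : F, {j : V // (j, a) ∈ E} where
  toFun e := ⟨e.1.2, ⟨e.1.1, e.2⟩⟩
  invFun x := ⟨(x.2.1, x.1), x.2.2⟩
  left_inv _ := rfl
  right_inv _ := rfl

/-- reindex edge sums by variable -/
def edgeEquivV {V F : Type} (E : Finset (V × F)) :
    {p : V × F // p ∈ E} ≃ Σ i : V, {a : F // (i, a) ∈ E} where
  toFun e := ⟨e.1.1, ⟨e.1.2, e.2⟩⟩
  invFun x := ⟨(x.1, x.2.1), x.2.2⟩
  left_inv _ := rfl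
  right_inv _ := rfl

/-- At a strictly positive BP fixed point of a factor graph with nonnegative, not
identically zero local functions, the Bethe partition sum `exp(−F_B)` at the induced
beliefs equals `(∏_a Z_a · ∏_i Z_i) / ∏_{(i,a)∈E} Z_{i,a}`. -/
theorem stmt4 {V F : Type} [Fintype V] [Fintype F] [DecidableEq V] [DecidableEq F]
    (E : Finset (V × F)) (X : V → Type)
    [∀ i, Fintype (X i)] [∀ i, DecidableEq (X i)] [∀ i, Nonempty (X i)]
    (f : ∀ a : F, (∀ j : {j : V // (j, a) ∈ E}, X j.1) → ℝ)
    (hf0 : ∀ a s, 0 ≤ f a s) (hfnz : ∀ a : F, ∃ s, f a s ≠ 0)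
    (mv mf : ∀ (i : V) (a : F), (i, a) ∈ E → X i → ℝ)
    (hmv : ∀ i a h xi, 0 < mv i a h xi) (hmf : ∀ i a h xi, 0 < mf i a h xi)
    (γ δ : ∀ (i : V) (a : F), (i, a) ∈ E → ℝ)
    (hγ : ∀ i a h, 0 < γ i a h) (hδ : ∀ i a h, 0 < δ i a h)
    (hfix₁ : ∀ (i : V) (a : F) (h : (i, a) ∈ E) (xi : X i),
      mv i a h xi = γ i a h *
        ∏ c ∈ univ.filter (fun c : {c : F // (i, c) ∈ E} => (c : F) ≠ a), mf i c.1 c.2 xi)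
    (hfix₂ : ∀ (i : V) (a : F) (h : (i, a) ∈ E) (xi : X i),
      mf i a h xi = δ i a h *
        ∑ s ∈ univ.filter
            (fun s : ∀ j : {j : V // (j, a) ∈ E}, X j.1 => s ⟨i, h⟩ = xi),
          f a s *
            ∏ j ∈ univ.filter (fun j : {j : V // (j, a) ∈ E} => (j : V) ≠ i),
              mv j.1 a j.2 (s j))
    (Za : F → ℝ)
    (hZa : ∀ a : F, Za a =
      ∑ s : ∀ j : {j : V // (j, a) ∈ E}, X j.1,
        f a s * ∏ j : {j : V // (j, a) ∈ E}, mv j.1 a j.2 (s j))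
    (Zi : V → ℝ)
    (hZi : ∀ i : V, Zi i = ∑ xi : X i, ∏ a : {a : F // (i, a) ∈ E}, mf i a.1 a.2 xi)
    (Zia : ∀ (i : V) (a : F), (i, a) ∈ E → ℝ)
    (hZia : ∀ (i : V) (a : F) (h : (i, a) ∈ E),
      Zia i a h = ∑ xi : X i, mv i a h xi * mf i a h xi)
    (bF : ∀ a : F, (∀ j : {j : V // (j, a) ∈ E}, X j.1) → ℝ)
    (hbF : ∀ (a : F) (s : ∀ j : {j : V // (j, a) ∈ E}, X j.1),
      bF a s = f a s * (∏ j : {j : V // (j, a) ∈ E}, mv j.1 a j.2 (s j)) / Za a)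
    (bV : ∀ i : V, X i → ℝ)
    (hbV : ∀ (i : V) (xi : X i),
      bV i xi = (∏ a : {a : F // (i, a) ∈ E}, mf i a.1 a.2 xi) / Zi i) :
    betheFE E X f bF bV ≠ ⊤ ∧
    Real.exp (- (betheFE E X f bF bV).toReal) =
      ((∏ a : F, Za a) * ∏ i : V, Zi i) /
        ∏ e : {p : V × F // p ∈ E}, Zia e.1.1 e.1.2 e.2 := by
  classical
  -- positivity
  have hZa_pos : ∀ a, 0 < Za a := by
    intro a
    rw [hZa a]
    obtain ⟨s0, hs0⟩ := hfnz a
    refine Finset.sum_pos' (fun s _ => mul_nonneg (hf0 a s)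
      (Finset.prod_nonneg fun j _ => (hmv _ _ _ _).le)) ⟨s0, Finset.mem_univ _, ?_⟩
    exact mul_pos (lt_of_le_of_ne (hf0 a s0) (Ne.symm hs0))
      (Finset.prod_pos fun j _ => hmv _ _ _ _)
  have hZi_pos : ∀ i, 0 < Zi i := by
    intro i
    rw [hZi i]
    exact Finset.sum_pos (fun x _ => Finset.prod_pos fun a _ => hmf _ _ _ _) univ_nonempty
  have hbV_pos : ∀ i x, 0 < bV i x := fun i x => by
    rw [hbV]; exact div_pos (Finset.prod_pos fun a _ => hmf _ _ _ _) (hZi_pos i)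
  have hbF_nonneg : ∀ a s, 0 ≤ bF a s := fun a s => by
    rw [hbF]
    exact div_nonneg (mul_nonneg (hf0 a s) (Finset.prod_nonneg fun j _ => (hmv _ _ _ _).le))
      (hZa_pos a).le
  have hbF_sum : ∀ a, ∑ s, bF a s = 1 := by
    intro a
    have h1 : ∑ s, bF a s = (∑ s, f a s * ∏ j, mv j.1 a j.2 (s j)) / Za a := by
      rw [Finset.sum_div]; exact Finset.sum_congr rfl fun s _ => hbF a s
    rw [h1, ← hZa a, div_self (hZa_pos a).ne']
  have hbV_sum : ∀ i, ∑ x, bV i x = 1 := by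
    intro i
    have h1 : ∑ x, bV i x = (∑ x, ∏ a : {a : F // (i, a) ∈ E}, mf i a.1 a.2 x) / Zi i := by
      rw [Finset.sum_div]; exact Finset.sum_congr rfl fun x _ => hbV i x
    rw [h1, ← hZi i, div_self (hZi_pos i).ne']
  -- product of incoming messages in terms of one pair
  have hprod : ∀ (i : V) (a : F) (h : (i, a) ∈ E) (x : X i),
      ∏ c : {c : F // (i, c) ∈ E}, mf i c.1 c.2 x = mv i a h x * mf i a h x / γ i a h := by
    intro i a h x
    have hfilt : (univ.filter (fun c : {c : F // (i, c) ∈ E} => (c : F) ≠ a))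
        = univ.erase ⟨a, h⟩ := by
      rw [← Finset.filter_ne']
      exact Finset.filter_congr fun c _ => by simp [Subtype.ext_iff]
    have h2 : ∏ c ∈ univ.erase (⟨a, h⟩ : {c : F // (i, c) ∈ E}), mf i c.1 c.2 x
        = mv i a h x / γ i a h := by
      rw [eq_div_iff (hγ i a h).ne', mul_comm, ← hfilt, ← hfix₁ i a h x]
    rw [← Finset.mul_prod_erase univ _ (Finset.mem_univ (⟨a, h⟩ : {c : F // (i, c) ∈ E})), h2]
    ring
  have hZia_eq : ∀ (i : V) (a : F) (h : (i, a) ∈ E), Zia i a h = γ i a h * Zi i := by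
    intro i a h
    rw [hZia i a h, hZi i, Finset.mul_sum]
    refine Finset.sum_congr rfl fun x _ => ?_
    rw [hprod i a h x, mul_comm (γ i a h), div_mul_cancel₀ _ (hγ i a h).ne']
  have hZia_pos : ∀ (i : V) (a : F) (h : (i, a) ∈ E), 0 < Zia i a h := fun i a h => by
    rw [hZia_eq i a h]; exact mul_pos (hγ i a h) (hZi_pos i)
  have hbV_edge : ∀ (i : V) (a : F) (h : (i, a) ∈ E) (x : X i),
      bV i x = mv i a h x * mf i a h x / Zia i a h := by
    intro i a h x
    rw [hbV, hprod i a h x, hZia_eq i a h, div_div]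
  -- marginal consistency: the i-marginal of bF a is bV i
  have hfiber : ∀ (a : F) (j : {j : V // (j, a) ∈ E}) (x : X j.1),
      ∑ s ∈ univ.filter (fun s : (∀ j : {j : V // (j, a) ∈ E}, X j.1) => s j = x), bF a s
        = bV j.1 x := by
    rintro a ⟨i, h⟩ x
    have key : ∀ x' : X i,
        ∑ s ∈ univ.filter (fun s : (∀ j : {j : V // (j, a) ∈ E}, X j.1) => s ⟨i, h⟩ = x'),
          f a s * ∏ j' : {j' : V // (j', a) ∈ E}, mv j'.1 a j'.2 (s j')
          = mv i a h x' * (mf i a h x' / δ i a h) := by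
      intro x'
      have hfilt : (univ.filter (fun j' : {j' : V // (j', a) ∈ E} => (j' : V) ≠ i))
          = univ.erase ⟨i, h⟩ := by
        rw [← Finset.filter_ne']
        exact Finset.filter_congr fun c _ => by simp [Subtype.ext_iff]
      have e1 : ∀ s ∈ univ.filter
          (fun s : (∀ j : {j : V // (j, a) ∈ E}, X j.1) => s ⟨i, h⟩ = x'),
          f a s * ∏ j' : {j' : V // (j', a) ∈ E}, mv j'.1 a j'.2 (s j')
          = mv i a h x' * (f a s *
              ∏ j' ∈ univ.filter (fun j' : {j' : V // (j', a) ∈ E} => (j' : V) ≠ i),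
                mv j'.1 a j'.2 (s j')) := by
        intro s hs
        rw [Finset.mem_filter] at hs
        rw [hfilt,
          ← Finset.mul_prod_erase univ _ (Finset.mem_univ (⟨i, h⟩ : {j' : V // (j', a) ∈ E})),
          hs.2]
        ring
      rw [Finset.sum_congr rfl e1, ← Finset.mul_sum]
      congr 1
      rw [eq_div_iff (hδ i a h).ne', mul_comm, ← hfix₂ i a h x']
    have hZaδ : Za a = Zia i a h / δ i a h := by
      rw [hZa a, ← Finset.sum_fiberwise univ (fun s => s (⟨i, h⟩ : {j : V // (j, a) ∈ E}))
        (fun s => f a s * ∏ j' : {j' : V // (j', a) ∈ E}, mv j'.1 a j'.2 (s j')),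
        hZia i a h, Finset.sum_div]
      refine Finset.sum_congr rfl fun x' _ => ?_
      rw [key x']
      ring
    have hsum : ∑ s ∈ univ.filter
        (fun s : (∀ j : {j : V // (j, a) ∈ E}, X j.1) => s ⟨i, h⟩ = x), bF a s
        = (mv i a h x * (mf i a h x / δ i a h)) / Za a := by
      rw [Finset.sum_congr rfl (fun s _ => hbF a s), ← Finset.sum_div, key x]
    rw [hsum, hZaδ, hbV_edge i a h x]
    have h1 : δ i a h ≠ 0 := (hδ i a h).ne'
    have h2 : Zia i a h ≠ 0 := (hZia_pos i a h).ne'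
    field_simp
  -- per-factor identity
  have hA : ∀ a : F,
      (∑ s, bF a s * Real.log (bF a s)) - (∑ s, bF a s * Real.log (f a s))
        = (∑ j : {j : V // (j, a) ∈ E}, ∑ x : X j.1, bV j.1 x * Real.log (mv j.1 a j.2 x))
          - Real.log (Za a) := by
    intro a
    rw [← Finset.sum_sub_distrib]
    have step1 : ∀ s : (∀ j : {j : V // (j, a) ∈ E}, X j.1),
        bF a s * Real.log (bF a s) - bF a s * Real.log (f a s)
        = (∑ j : {j : V // (j, a) ∈ E}, bF a s * Real.log (mv j.1 a j.2 (s j)))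
          - bF a s * Real.log (Za a) := by
      intro s
      by_cases hfs : f a s = 0
      · have hb0 : bF a s = 0 := by rw [hbF, hfs]; simp
        simp [hb0]
      · have hfp : 0 < f a s := lt_of_le_of_ne (hf0 a s) (Ne.symm hfs)
        have hP : 0 < ∏ j : {j : V // (j, a) ∈ E}, mv j.1 a j.2 (s j) :=
          Finset.prod_pos fun j _ => hmv _ _ _ _
        have hlog : Real.log (bF a s)
            = Real.log (f a s) + (∑ j : {j : V // (j, a) ∈ E}, Real.log (mv j.1 a j.2 (s j)))
              - Real.log (Za a) := by
          rw [hbF, Real.log_div (by positivity) (hZa_pos a).ne',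
            Real.log_mul hfp.ne' hP.ne', Real.log_prod fun j _ => (hmv _ _ _ _).ne']
        rw [hlog, ← Finset.mul_sum]
        ring
    rw [Finset.sum_congr rfl fun s _ => step1 s, Finset.sum_sub_distrib,
      ← Finset.sum_mul, hbF_sum a, one_mul]
    congr 1
    rw [Finset.sum_comm]
    refine Finset.sum_congr rfl fun j _ => ?_
    rw [← Finset.sum_fiberwise univ (fun s => s j)
      (fun s => bF a s * Real.log (mv j.1 a j.2 (s j)))]
    refine Finset.sum_congr rfl fun x _ => ?_
    calc ∑ s ∈ univ.filter (fun s : (∀ j : {j : V // (j, a) ∈ E}, X j.1) => s j = x),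
          bF a s * Real.log (mv j.1 a j.2 (s j))
        = ∑ s ∈ univ.filter (fun s : (∀ j : {j : V // (j, a) ∈ E}, X j.1) => s j = x),
            bF a s * Real.log (mv j.1 a j.2 x) :=
          Finset.sum_congr rfl fun s hs => by rw [(Finset.mem_filter.mp hs).2]
      _ = bV j.1 x * Real.log (mv j.1 a j.2 x) := by rw [← Finset.sum_mul, hfiber a j x]
  -- per-variable identity
  have hC : ∀ i : V,
      (∑ a : {a : F // (i, a) ∈ E}, ∑ x : X i, bV i x * Real.log (mv i a.1 a.2 x))
        = ((Fintype.card {c : F // (i, c) ∈ E} : ℝ) - 1)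
            * (∑ x : X i, bV i x * Real.log (bV i x))
          - Real.log (Zi i) + ∑ a : {a : F // (i, a) ∈ E}, Real.log (Zia i a.1 a.2) := by
    intro i
    have hB : ∑ a : {a : F // (i, a) ∈ E}, ∑ x : X i, bV i x * Real.log (mf i a.1 a.2 x)
        = (∑ x : X i, bV i x * Real.log (bV i x)) + Real.log (Zi i) := by
      rw [Finset.sum_comm]
      have e2 : ∀ x : X i, ∑ a : {a : F // (i, a) ∈ E}, bV i x * Real.log (mf i a.1 a.2 x)
          = bV i x * Real.log (bV i x) + bV i x * Real.log (Zi i) := by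
        intro x
        rw [← Finset.mul_sum, ← Real.log_prod fun a _ => (hmf _ _ _ _).ne']
        have hp : ∏ a : {a : F // (i, a) ∈ E}, mf i a.1 a.2 x = bV i x * Zi i := by
          rw [hbV, div_mul_cancel₀ _ (hZi_pos i).ne']
        rw [hp, Real.log_mul (hbV_pos i x).ne' (hZi_pos i).ne', mul_add]
      rw [Finset.sum_congr rfl fun x _ => e2 x, Finset.sum_add_distrib,
        ← Finset.sum_mul, hbV_sum i, one_mul]
    have e1 : ∀ a : {a : F // (i, a) ∈ E},
        ∑ x : X i, bV i x * Real.log (mv i a.1 a.2 x)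
        = (∑ x : X i, bV i x * Real.log (bV i x))
          - (∑ x : X i, bV i x * Real.log (mf i a.1 a.2 x)) + Real.log (Zia i a.1 a.2) := by
      intro a
      have e3 : ∀ x : X i, bV i x * Real.log (mv i a.1 a.2 x)
          = bV i x * Real.log (bV i x) - bV i x * Real.log (mf i a.1 a.2 x)
            + bV i x * Real.log (Zia i a.1 a.2) := by
        intro x
        have hlog : Real.log (bV i x) = Real.log (mv i a.1 a.2 x) + Real.log (mf i a.1 a.2 x)
            - Real.log (Zia i a.1 a.2) := by
          rw [hbV_edge i a.1 a.2 x,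
            Real.log_div (mul_pos (hmv _ _ _ _) (hmf _ _ _ _)).ne' (hZia_pos i a.1 a.2).ne',
            Real.log_mul (hmv _ _ _ _).ne' (hmf _ _ _ _).ne']
        rw [hlog]; ring
      rw [Finset.sum_congr rfl fun x _ => e3 x, Finset.sum_add_distrib,
        Finset.sum_sub_distrib, ← Finset.sum_mul, hbV_sum i, one_mul]
    rw [Finset.sum_congr rfl fun a _ => e1 a, Finset.sum_add_distrib, Finset.sum_sub_distrib,
      Finset.sum_const, Finset.card_univ, nsmul_eq_mul, hB]
    ring
  -- reindexing lemmas
  have sigmaF : ∀ (g : ∀ a : F, {j : V // (j, a) ∈ E} → ℝ),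
      ∑ a : F, ∑ j : {j : V // (j, a) ∈ E}, g a j
        = ∑ e : {p : V × F // p ∈ E}, g e.1.2 ⟨e.1.1, e.2⟩ := by
    intro g
    rw [Finset.sum_sigma' univ (fun _ => univ) g, Finset.univ_sigma_univ]
    exact (Equiv.sum_comp (edgeEquivF E) (fun y => g y.1 y.2)).symm
  have sigmaV : ∀ (g : ∀ i : V, {a : F // (i, a) ∈ E} → ℝ),
      ∑ i : V, ∑ a : {a : F // (i, a) ∈ E}, g i a
        = ∑ e : {p : V × F // p ∈ E}, g e.1.1 ⟨e.1.2, e.2⟩ := by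
    intro g
    rw [Finset.sum_sigma' univ (fun _ => univ) g, Finset.univ_sigma_univ]
    exact (Equiv.sum_comp (edgeEquivV E) (fun y => g y.1 y.2)).symm
  -- finiteness
  have hne : ¬ ∃ (a : F) (s : ∀ j : {j : V // (j, a) ∈ E}, X j.1),
      0 < bF a s ∧ f a s = 0 := by
    rintro ⟨a, s, hpos, hfs⟩
    rw [hbF, hfs, zero_mul, zero_div] at hpos
    exact lt_irrefl 0 hpos
  -- the main identity for the real-valued free energy
  have h5 : (∑ a : F, ∑ j : {j : V // (j, a) ∈ E}, ∑ x : X j.1,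
        bV j.1 x * Real.log (mv j.1 a j.2 x))
      = ∑ i : V, ∑ a : {a : F // (i, a) ∈ E}, ∑ x : X i,
          bV i x * Real.log (mv i a.1 a.2 x) :=
    (sigmaF fun a j => ∑ x : X j.1, bV j.1 x * Real.log (mv j.1 a j.2 x)).trans
      (sigmaV fun i a => ∑ x : X i, bV i x * Real.log (mv i a.1 a.2 x)).symm
  have h4 : (∑ i : V, ∑ a : {a : F // (i, a) ∈ E}, Real.log (Zia i a.1 a.2))
      = ∑ e : {p : V × F // p ∈ E}, Real.log (Zia e.1.1 e.1.2 e.2) := sigmaV _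
  have hmain : (- ∑ a : F, ∑ s : ∀ j : {j : V // (j, a) ∈ E}, X j.1, bF a s * Real.log (f a s)
      + ∑ a : F, ∑ s : ∀ j : {j : V // (j, a) ∈ E}, X j.1, bF a s * Real.log (bF a s)
      - ∑ i : V, ((Fintype.card {c : F // (i, c) ∈ E} : ℝ) - 1)
          * ∑ xi : X i, bV i xi * Real.log (bV i xi))
      = (∑ e : {p : V × F // p ∈ E}, Real.log (Zia e.1.1 e.1.2 e.2))
        - (∑ a : F, Real.log (Za a)) - (∑ i : V, Real.log (Zi i)) := by
    have h1 : - (∑ a : F, ∑ s : ∀ j : {j : V // (j, a) ∈ E}, X j.1, bF a s * Real.log (f a s))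
        + ∑ a : F, ∑ s : ∀ j : {j : V // (j, a) ∈ E}, X j.1, bF a s * Real.log (bF a s)
        = (∑ a : F, ∑ j : {j : V // (j, a) ∈ E}, ∑ x : X j.1,
            bV j.1 x * Real.log (mv j.1 a j.2 x)) - ∑ a : F, Real.log (Za a) := by
      rw [neg_add_eq_sub, ← Finset.sum_sub_distrib,
        Finset.sum_congr rfl fun a _ => hA a, Finset.sum_sub_distrib]
    rw [h1, h5, Finset.sum_congr rfl fun i _ => hC i, Finset.sum_add_distrib,
      Finset.sum_sub_distrib, h4]
    ring
  unfold betheFE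
  rw [if_neg hne]
  refine ⟨EReal.coe_ne_top _, ?_⟩
  rw [EReal.toReal_coe, hmain]
  have eZa : Real.exp (∑ a : F, Real.log (Za a)) = ∏ a : F, Za a := by
    rw [Real.exp_sum]; exact Finset.prod_congr rfl fun a _ => Real.exp_log (hZa_pos a)
  have eZi : Real.exp (∑ i : V, Real.log (Zi i)) = ∏ i : V, Zi i := by
    rw [Real.exp_sum]; exact Finset.prod_congr rfl fun i _ => Real.exp_log (hZi_pos i)
  have eZe : Real.exp (∑ e : {p : V × F // p ∈ E}, Real.log (Zia e.1.1 e.1.2 e.2))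
      = ∏ e : {p : V × F // p ∈ E}, Zia e.1.1 e.1.2 e.2 := by
    rw [Real.exp_sum]
    exact Finset.prod_congr rfl fun e _ => Real.exp_log (hZia_pos e.1.1 e.1.2 e.2)
  rw [show -((∑ e : {p : V × F // p ∈ E}, Real.log (Zia e.1.1 e.1.2 e.2))
      - (∑ a : F, Real.log (Za a)) - (∑ i : V, Real.log (Zi i)))
      = (∑ a : F, Real.log (Za a)) + (∑ i : V, Real.log (Zi i))
        + -(∑ e : {p : V × F // p ∈ E}, Real.log (Zia e.1.1 e.1.2 e.2)) by ring]
  rw [Real.exp_add, Real.exp_add, Real.exp_neg, eZa, eZi, eZe, div_eq_mul_inv]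
end

section
/- (Closing-the-box preserves the DeFG property.) Let a DeFG be given and let (J, I, F') be a box: F' ⊆ F, J ⊆ V₂, I ⊆ V₁, such that every factor adjacent (via E₂ or E₁) to a vertex of J or of I belongs to F'. Let P := (⋃_{a∈F'} ∂a) ∖ J and R := (⋃_{a∈F'} δa) ∖ I. Define the exterior function f' on (∏_{j∈P} S_j) × (∏_{j∈P} S_j) × (∏_{i∈R} X_i) by f'(s_P, s̃_P; x_R) := ∑_{s_J, s̃_J ∈ ∏_{j∈J} S_j} ∑_{x_I ∈ ∏_{i∈I} X_i} ∏_{a∈F'} f_a(s_{∂a}, s̃_{∂a}; x_{δa}), where each f_a is evaluated at the coordinates indexed by ∂a taken from the combined assignments (s_P, s_J) and (s̃_P, s̃_J), and at the coordinates indexed by δa taken from (x_R, x_I). Then for every fixed x_R ∈ ∏_{i∈R} X_i, the matrix with rows indexed by s_P, columns indexed by s̃_P, and entries f'(s_P, s̃_P; x_R), is positive semidefinite; hence the graph obtained by a closing-the-box operation on a DeFG is again a DeFG. -/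
open Finset
open scoped ComplexOrder


lemma psd_entrywise_mul {n : Type} [Fintype n] {A B : Matrix n n ℂ}
    (hA : A.PosSemidef) (hB : B.PosSemidef) :
    Matrix.PosSemidef (Matrix.of fun i j => A i j * B i j) := by
  obtain ⟨C, hC⟩ : ∃ C : Matrix n n ℂ, A = Matrix.conjTranspose C * C := by
    classical
    open scoped MatrixOrder Matrix.Norms.L2Operator in
    obtain ⟨C, hC⟩ := CStarAlgebra.nonneg_iff_eq_star_mul_self.mp hA.nonneg
    exact ⟨C, hC⟩
  refine Matrix.posSemidef_iff_dotProduct_mulVec.mpr ⟨?_, ?_⟩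
  · show Matrix.conjTranspose _ = _
    ext i j
    simp only [Matrix.conjTranspose_apply, Matrix.of_apply, star_mul']
    rw [← Matrix.conjTranspose_apply A, ← Matrix.conjTranspose_apply B, hA.1, hB.1, mul_comm]
  · intro x
    have key : dotProduct (star x) (Matrix.mulVec (Matrix.of fun i j => A i j * B i j) x)
        = ∑ k, dotProduct (star (fun i => x i * C k i))
            (Matrix.mulVec B (fun i => x i * C k i)) := by
      simp only [dotProduct, Matrix.mulVec, Pi.star_apply, Matrix.of_apply, hC,
        Matrix.mul_apply, Matrix.conjTranspose_apply, Finset.mul_sum, Finset.sum_mul]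
      conv_lhs => rw [show (∑ a : n, ∑ b : n, ∑ k : n, star (x a) * (star (C k a) * C k b * B a b * x b)) = ∑ a : n, ∑ k : n, ∑ b : n, star (x a) * (star (C k a) * C k b * B a b * x b) from Finset.sum_congr rfl fun a _ => Finset.sum_comm ..]
      rw [Finset.sum_comm]
      refine Finset.sum_congr rfl fun k _ => Finset.sum_congr rfl fun a _ => Finset.sum_congr rfl fun b _ => ?_
      simp only [star_mul']
      ring
    rw [key]
    exact Finset.sum_nonneg fun k _ => hB.dotProduct_mulVec_nonneg _

lemma psd_ones {n : Type} [Fintype n] :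
    Matrix.PosSemidef (Matrix.of fun _ _ : n => (1 : ℂ)) := by
  refine Matrix.posSemidef_iff_dotProduct_mulVec.mpr ⟨?_, ?_⟩
  · show Matrix.conjTranspose _ = _
    ext i j; simp
  · intro x
    have : dotProduct (star x) (Matrix.mulVec (Matrix.of fun _ _ : n => (1:ℂ)) x)
        = star (∑ j, x j) * (∑ j, x j) := by
      simp [dotProduct, Matrix.mulVec, Finset.sum_mul, star_sum, Finset.mul_sum]
      exact Finset.sum_comm ..
    rw [this]
    exact star_mul_self_nonneg _

lemma psd_prod {n ι : Type} [Fintype n] (s : Finset ι) (g : ι → Matrix n n ℂ)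
    (h : ∀ a ∈ s, (g a).PosSemidef) :
    Matrix.PosSemidef (Matrix.of fun i j => ∏ a ∈ s, g a i j) := by
  classical
  induction s using Finset.cons_induction with
  | empty => simpa using psd_ones
  | cons a t ha ih =>
    have : (Matrix.of fun i j => ∏ b ∈ Finset.cons a t ha, g b i j)
        = Matrix.of fun i j => (g a) i j * (Matrix.of fun i j => ∏ b ∈ t, g b i j) i j := by
      ext i j; simp [Finset.prod_insert ha]
    rw [this]
    exact psd_entrywise_mul (h a (Finset.mem_cons_self a t))
      (ih fun b hb => h b (Finset.mem_cons_of_mem hb))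

lemma psd_sum {n ι : Type} [Fintype n] [Fintype ι] (g : ι → Matrix n n ℂ)
    (h : ∀ a, (g a).PosSemidef) :
    Matrix.PosSemidef (Matrix.of fun i j => ∑ a, g a i j) := by
  have : (Matrix.of fun i j => ∑ a, g a i j) = ∑ a, g a := by
    ext i j; simp [Matrix.sum_apply]
  rw [this]
  classical
  induction (Finset.univ : Finset ι) using Finset.cons_induction with
  | empty => simpa using Matrix.PosSemidef.zero
  | cons a t ha ih => rw [Finset.sum_cons]; exact (h a).add ih

lemma psd_marg {α β : Type} [Fintype α] [Fintype β] {B : Matrix (α × β) (α × β) ℂ}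
    (hB : B.PosSemidef) :
    Matrix.PosSemidef (Matrix.of fun p q : α => ∑ s : β, ∑ t : β, B (p, s) (q, t)) := by
  classical
  have := hB.conjTranspose_mul_mul_same (m := α)
    (Matrix.of fun (k : α × β) (p : α) => if k.1 = p then (1:ℂ) else 0)
  convert this using 1
  ext p q
  simp only [Matrix.mul_apply, Matrix.conjTranspose_apply, Matrix.of_apply]
  simp [Fintype.sum_prod_type, boole_mul, mul_boole, Finset.sum_ite_eq, Finset.sum_ite_eq']
  conv_rhs => rw [Finset.sum_comm]
  simp only [Finset.sum_ite_eq', Finset.mem_univ, if_true]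
  conv_lhs => rw [Finset.sum_comm]
  refine Finset.sum_congr rfl fun t _ => ?_
  rw [Finset.sum_comm]
  simp [Finset.sum_ite_eq']


/-- Closing-the-box preserves the DeFG property: given a double-edge factor graph with
positive-semidefinite local functions and a box `(J, I, F')`, the exterior function
obtained by summing over the variables inside the box is again positive semidefinite
(as a matrix in the remaining quantum variables, for each fixed classical assignment). -/
theorem stmt5 {V₁ V₂ F : Type} [Fintype V₁] [Fintype V₂] [Fintype F]
    [DecidableEq V₁] [DecidableEq V₂] [DecidableEq F]
    (E₁ : Finset (V₁ × F)) (E₂ : Finset (V₂ × F))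
    (X : V₁ → Type) [∀ i, Fintype (X i)] [∀ i, DecidableEq (X i)] [∀ i, Nonempty (X i)]
    (S : V₂ → Type) [∀ j, Fintype (S j)] [∀ j, DecidableEq (S j)] [∀ j, Nonempty (S j)]
    (f : ∀ a : F, (∀ j : {j : V₂ // (j, a) ∈ E₂}, S j.1) →
                  (∀ j : {j : V₂ // (j, a) ∈ E₂}, S j.1) →
                  (∀ i : {i : V₁ // (i, a) ∈ E₁}, X i.1) → ℂ)
    (hPSD : ∀ (a : F) (x : ∀ i : {i : V₁ // (i, a) ∈ E₁}, X i.1),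
      Matrix.PosSemidef (Matrix.of fun s st => f a s st x))
    (F' : Finset F) (J : Finset V₂) (I : Finset V₁)
    (hJ : ∀ (j : V₂) (a : F), j ∈ J → (j, a) ∈ E₂ → a ∈ F')
    (hI : ∀ (i : V₁) (a : F), i ∈ I → (i, a) ∈ E₁ → a ∈ F')
    (xR : ∀ i : {i : V₁ // (∃ a ∈ F', (i, a) ∈ E₁) ∧ i ∉ I}, X i.1) :
    Matrix.PosSemidef (Matrix.of
      fun (sP stP : ∀ j : {j : V₂ // (∃ a ∈ F', (j, a) ∈ E₂) ∧ j ∉ J}, S j.1) =>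
        ∑ sJ : ∀ j : {j : V₂ // j ∈ J}, S j.1,
        ∑ stJ : ∀ j : {j : V₂ // j ∈ J}, S j.1,
        ∑ xI : ∀ i : {i : V₁ // i ∈ I}, X i.1,
          ∏ a ∈ F'.attach,
            f a.1
              (fun j => if h : j.1 ∈ J then sJ ⟨j.1, h⟩
                        else sP ⟨j.1, ⟨⟨a.1, a.2, j.2⟩, h⟩⟩)
              (fun j => if h : j.1 ∈ J then stJ ⟨j.1, h⟩
                        else stP ⟨j.1, ⟨⟨a.1, a.2, j.2⟩, h⟩⟩)
              (fun i => if h : i.1 ∈ I then xI ⟨i.1, h⟩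
                        else xR ⟨i.1, ⟨⟨a.1, a.2, i.2⟩, h⟩⟩)) := by
  classical
  set Q := ∀ j : {j : V₂ // (∃ a ∈ F', (j, a) ∈ E₂) ∧ j ∉ J}, S j.1 with hQ
  set JT := ∀ j : {j : V₂ // j ∈ J}, S j.1 with hJT
  set IT := ∀ i : {i : V₁ // i ∈ I}, X i.1 with hIT
  -- restriction maps
  let r : ∀ a : {a // a ∈ F'}, Q × JT → (∀ j : {j : V₂ // (j, a.1) ∈ E₂}, S j.1) :=
    fun a k j => if h : j.1 ∈ J then k.2 ⟨j.1, h⟩ else k.1 ⟨j.1, ⟨⟨a.1, a.2, j.2⟩, h⟩⟩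
  let xf : ∀ a : {a // a ∈ F'}, IT → (∀ i : {i : V₁ // (i, a.1) ∈ E₁}, X i.1) :=
    fun a xI i => if h : i.1 ∈ I then xI ⟨i.1, h⟩ else xR ⟨i.1, ⟨⟨a.1, a.2, i.2⟩, h⟩⟩
  let B : IT → Matrix (Q × JT) (Q × JT) ℂ :=
    fun xI => Matrix.of fun k k' =>
      ∏ a ∈ F'.attach, f a.1 (r a k) (r a k') (xf a xI)
  have hB : ∀ xI, (B xI).PosSemidef := by
    intro xI
    exact psd_prod F'.attach
      (fun a => ((Matrix.of fun s st => f a.1 s st (xf a xI))).submatrix (r a) (r a))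
      (fun a _ => (hPSD a.1 (xf a xI)).submatrix (r a))
  have hM : ∀ xI, Matrix.PosSemidef
      (Matrix.of fun p q : Q => ∑ s : JT, ∑ t : JT, (B xI) (p, s) (q, t)) :=
    fun xI => psd_marg (hB xI)
  have hsum := psd_sum
    (fun xI : IT => Matrix.of fun p q : Q => ∑ s : JT, ∑ t : JT, (B xI) (p, s) (q, t)) hM
  have heq : (Matrix.of fun (sP stP : Q) => ∑ sJ : JT, ∑ stJ : JT, ∑ xI : IT,
          ∏ a ∈ F'.attach, f a.1 (r a (sP, sJ)) (r a (stP, stJ)) (xf a xI))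
      = Matrix.of fun p q : Q => ∑ xI : IT, ∑ s : JT, ∑ t : JT, (B xI) (p, s) (q, t) := by
    ext sP stP
    simp only [Matrix.of_apply]
    calc (∑ sJ : JT, ∑ stJ : JT, ∑ xI : IT,
          ∏ a ∈ F'.attach, f a.1 (r a (sP, sJ)) (r a (stP, stJ)) (xf a xI))
      = ∑ sJ : JT, ∑ xI : IT, ∑ stJ : JT,
          ∏ a ∈ F'.attach, f a.1 (r a (sP, sJ)) (r a (stP, stJ)) (xf a xI) :=
        Finset.sum_congr rfl fun sJ _ => Finset.sum_comm ..
    _ = ∑ xI : IT, ∑ sJ : JT, ∑ stJ : JT,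
          ∏ a ∈ F'.attach, f a.1 (r a (sP, sJ)) (r a (stP, stJ)) (xf a xI) :=
        Finset.sum_comm ..
  exact heq ▸ hsum
end

section
/- For any DeFG, the partition sum Z := ∑_{s, s̃ ∈ ∏_{j∈V₂} S_j} ∑_{x ∈ ∏_{i∈V₁} X_i} ∏_{a∈F} f_a(s_{∂a}, s̃_{∂a}; x_{δa}) is a nonnegative real number; that is, Z has zero imaginary part and nonnegative real part. -/
open Finset
open scoped ComplexOrder

private lemma sum_rot {α β γ M : Type*} [AddCommMonoid M] [Fintype α] [Fintype β] [Fintype γ]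
    (g : α → β → γ → M) :
    ∑ a : α, ∑ b : β, ∑ c : γ, g a b c = ∑ c : γ, ∑ a : α, ∑ b : β, g a b c := by
  have h1 : ∀ a : α, ∑ b : β, ∑ c : γ, g a b c = ∑ c : γ, ∑ b : β, g a b c :=
    fun a => Finset.sum_comm
  simp_rw [h1]
  exact Finset.sum_comm

private lemma key {A I : Type*} [Fintype A] [DecidableEq A] [Fintype I] [DecidableEq I]
    (G : A → Matrix I I ℂ) (h : ∀ a, (G a).PosSemidef) :
    0 ≤ ∑ s : I, ∑ st : I, ∏ a : A, G a s st := by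
  choose B hB using fun a => (by open scoped MatrixOrder in exact (CStarAlgebra.nonneg_iff_eq_star_mul_self.mp (h a).nonneg) : ∃ B : Matrix I I ℂ, G a = B.conjTranspose * B)
  have hF : ∀ a (s st : I), G a s st = ∑ k : I, star (B a k s) * B a k st := by
    intro a s st
    conv_lhs => rw [hB a]
    simp [Matrix.mul_apply, Matrix.conjTranspose_apply]
  have key : (∑ s : I, ∑ st : I, ∏ a : A, G a s st)
      = ∑ κ : A → I, star (∑ s : I, ∏ a : A, B a (κ a) s) * (∑ st : I, ∏ a : A, B a (κ a) st) := by
    simp_rw [hF, Finset.prod_univ_sum, Fintype.piFinset_univ, Finset.prod_mul_distrib,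
      star_sum, star_prod, Finset.sum_mul, Finset.mul_sum]
    exact sum_rot _
  rw [key]
  exact Finset.sum_nonneg fun κ _ => star_mul_self_nonneg _

/-- The partition sum of a double-edge factor graph (with positive semidefinite local
functions) is a nonnegative real number: its imaginary part vanishes and its real part is
nonnegative. -/
theorem stmt6 {V₁ V₂ F : Type} [Fintype V₁] [Fintype V₂] [Fintype F]
    [DecidableEq V₁] [DecidableEq V₂] [DecidableEq F]
    (E₁ : Finset (V₁ × F)) (E₂ : Finset (V₂ × F))
    (X : V₁ → Type) [∀ i, Fintype (X i)] [∀ i, DecidableEq (X i)] [∀ i, Nonempty (X i)]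
    (S : V₂ → Type) [∀ j, Fintype (S j)] [∀ j, DecidableEq (S j)] [∀ j, Nonempty (S j)]
    (f : ∀ a : F, (∀ j : {j : V₂ // (j, a) ∈ E₂}, S j.1) →
                  (∀ j : {j : V₂ // (j, a) ∈ E₂}, S j.1) →
                  (∀ i : {i : V₁ // (i, a) ∈ E₁}, X i.1) → ℂ)
    (hPSD : ∀ (a : F) (x : ∀ i : {i : V₁ // (i, a) ∈ E₁}, X i.1),
      Matrix.PosSemidef (Matrix.of fun s st => f a s st x)) :
    (∑ s : ∀ j : V₂, S j, ∑ st : ∀ j : V₂, S j, ∑ x : ∀ i : V₁, X i,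
        ∏ a : F, f a (fun j => s j.1) (fun j => st j.1) (fun i => x i.1)).im = 0 ∧
    0 ≤ (∑ s : ∀ j : V₂, S j, ∑ st : ∀ j : V₂, S j, ∑ x : ∀ i : V₁, X i,
        ∏ a : F, f a (fun j => s j.1) (fun j => st j.1) (fun i => x i.1)).re := by
  have hZ : (0 : ℂ) ≤ ∑ s : ∀ j : V₂, S j, ∑ st : ∀ j : V₂, S j, ∑ x : ∀ i : V₁, X i,
      ∏ a : F, f a (fun j => s j.1) (fun j => st j.1) (fun i => x i.1) := by
    rw [sum_rot]
    refine Finset.sum_nonneg fun x _ => ?_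
    exact key (fun a => (Matrix.of fun s st => f a s st (fun i => x i.1)).submatrix
        (fun (s : ∀ j : V₂, S j) (j : {j : V₂ // (j, a) ∈ E₂}) => s j.1)
        (fun (s : ∀ j : V₂, S j) (j : {j : V₂ // (j, a) ∈ E₂}) => s j.1))
      (fun a => (hPSD a _).submatrix _)
  rw [Complex.le_def] at hZ
  exact ⟨by simpa using hZ.2.symm, by simpa using hZ.1⟩
end

section
/- (Holant theorem for DeFGs.) Let a DeFG without classical variables be given, with partition sum Z := ∑_{s, s̃ ∈ ∏_{j∈V} S_j} ∏_{a∈F} f_a(s_{∂a}, s̃_{∂a}). Suppose for each edge (j,a) ∈ E a finite set T_{j,a} and functions φ_{j,a} : S_j×S_j×T_{j,a}×T_{j,a} → ℂ and φ̂_{j,a} : T_{j,a}×T_{j,a}×S_j×S_j → ℂ are given which are Hermitian (φ_{j,a}(s,s̃;t,t̃) = conj(φ_{j,a}(s̃,s;t̃,t)) and φ̂_{j,a}(t,t̃;s,s̃) = conj(φ̂_{j,a}(t̃,t;s̃,s))) and satisfy ∑_{t,t̃∈T_{j,a}} φ_{j,a}(s,s̃;t,t̃)·φ̂_{j,a}(t,t̃;s',s̃')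 = δ_{s,s'}·δ_{s̃,s̃'} for all s,s̃,s',s̃' ∈ S_j. Define f̂_a(t_{∂a,a}, t̃_{∂a,a}) := ∑_{s_{∂a}, s̃_{∂a}} f_a(s_{∂a}, s̃_{∂a})·∏_{j∈∂a} φ̂_{j,a}(t_{j,a}, t̃_{j,a}; s_j, s̃_j) and ĥ_j(t_{j,∂j}, t̃_{j,∂j}) := ∑_{s_j, s̃_j} ∏_{a∈∂j} φ_{j,a}(s_j, s̃_j; t_{j,a}, t̃_{j,a}). Then Z = ∑_{t, t̃ ∈ ∏_{(j,a)∈E} T_{j,a}} ∏_{a∈F} f̂_a(t_{∂a,a}, t̃_{∂a,a}) · ∏_{j∈V} ĥ_j(t_{j,∂j}, t̃_{j,∂j}). -/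
open Finset
open scoped ComplexOrder

set_option linter.unusedVariables false
set_option maxHeartbeats 2000000

private lemma prod_sum_pi {ι : Type} [Fintype ι] [DecidableEq ι]
    {κ : ι → Type} [∀ i, Fintype (κ i)] [∀ i, DecidableEq (κ i)]
    (g : ∀ i, κ i → ℂ) :
    ∏ i, ∑ a : κ i, g i a = ∑ x : ∀ i, κ i, ∏ i, g i (x i) := by
  rw [Finset.prod_univ_sum (fun i => (univ : Finset (κ i))), Fintype.piFinset_univ]

private lemma sum_sum_prod {ι : Type} [Fintype ι] [DecidableEq ι]
    {κ : ι → Type} [∀ i, Fintype (κ i)] [∀ i, DecidableEq (κ i)]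
    (K : ∀ i, κ i → κ i → ℂ) :
    ∑ x : ∀ i, κ i, ∑ y : ∀ i, κ i, ∏ i, K i (x i) (y i)
      = ∏ i, ∑ a : κ i, ∑ b : κ i, K i a b := by
  calc ∑ x : ∀ i, κ i, ∑ y : ∀ i, κ i, ∏ i, K i (x i) (y i)
      = ∑ x : ∀ i, κ i, ∏ i, ∑ b : κ i, K i (x i) b :=
        Finset.sum_congr rfl fun x _ => (prod_sum_pi fun i b => K i (x i) b).symm
    _ = ∏ i, ∑ a : κ i, ∑ b : κ i, K i a b := (prod_sum_pi fun i a => ∑ b, K i a b).symm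

private def facEquiv {V F : Type} (E : Finset (V × F)) :
    (Σ a : F, {j : V // (j, a) ∈ E}) ≃ {p : V × F // p ∈ E} where
  toFun x := ⟨(x.2.1, x.1), x.2.2⟩
  invFun e := ⟨e.1.2, e.1.1, e.2⟩
  left_inv := fun ⟨a, j, h⟩ => rfl
  right_inv := fun ⟨⟨j, a⟩, h⟩ => rfl

private def verEquiv {V F : Type} (E : Finset (V × F)) :
    (Σ j : V, {c : F // (j, c) ∈ E}) ≃ {p : V × F // p ∈ E} where
  toFun x := ⟨(x.1, x.2.1), x.2.2⟩
  invFun e := ⟨e.1.1, e.1.2, e.2⟩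
  left_inv := fun ⟨j, c, h⟩ => rfl
  right_inv := fun ⟨⟨j, a⟩, h⟩ => rfl

private def pairPiEquiv {ι : Type} (κ : ι → Type) :
    (∀ i, κ i × κ i) ≃ (∀ i, κ i) × (∀ i, κ i) where
  toFun τ := (fun i => (τ i).1, fun i => (τ i).2)
  invFun p i := (p.1 i, p.2 i)
  left_inv τ := rfl
  right_inv p := rfl

/-- Holant theorem for DeFGs: given, for every edge `(j,a)` of a DeFG (without classical
variables), a finite set `T j a` together with Hermitian functions `φ j a` and `φh j a`
inverse to each other, the partition sum can be computed from the transformed local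
functions `f̂_a` and the new vertex functions `ĥ_j`. -/
theorem stmt8 {V F : Type} [Fintype V] [Fintype F] [DecidableEq V] [DecidableEq F]
    (E : Finset (V × F))
    (S : V → Type) [∀ j, Fintype (S j)] [∀ j, DecidableEq (S j)] [∀ j, Nonempty (S j)]
    (f : ∀ a : F, (∀ j : {j : V // (j, a) ∈ E}, S j.1) →
                  (∀ j : {j : V // (j, a) ∈ E}, S j.1) → ℂ)
    (hPSD : ∀ a : F, Matrix.PosSemidef (Matrix.of fun s st => f a s st))
    (T : V → F → Type) [∀ j a, Fintype (T j a)] [∀ j a, DecidableEq (T j a)]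
    (φ : ∀ (j : V) (a : F), S j → S j → T j a → T j a → ℂ)
    (φh : ∀ (j : V) (a : F), T j a → T j a → S j → S j → ℂ)
    (hφHerm : ∀ (j : V) (a : F), (j, a) ∈ E → ∀ (s st : S j) (t tt : T j a),
      φ j a s st t tt = (starRingEnd ℂ) (φ j a st s tt t))
    (hφhHerm : ∀ (j : V) (a : F), (j, a) ∈ E → ∀ (t tt : T j a) (s st : S j),
      φh j a t tt s st = (starRingEnd ℂ) (φh j a tt t st s))
    (hinv : ∀ (j : V) (a : F), (j, a) ∈ E → ∀ s st s' st' : S j,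
      ∑ t : T j a, ∑ tt : T j a, φ j a s st t tt * φh j a t tt s' st'
        = (if s = s' then 1 else 0) * (if st = st' then 1 else 0)) :
    ∑ s : ∀ j : V, S j, ∑ st : ∀ j : V, S j,
        ∏ a : F, f a (fun j => s j.1) (fun j => st j.1)
      = ∑ t : ∀ e : {p : V × F // p ∈ E}, T e.1.1 e.1.2,
        ∑ tt : ∀ e : {p : V × F // p ∈ E}, T e.1.1 e.1.2,
          (∏ a : F,
            ∑ s : ∀ j : {j : V // (j, a) ∈ E}, S j.1,
            ∑ st : ∀ j : {j : V // (j, a) ∈ E}, S j.1,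
              f a s st *
                ∏ j : {j : V // (j, a) ∈ E},
                  φh j.1 a (t ⟨(j.1, a), j.2⟩) (tt ⟨(j.1, a), j.2⟩) (s j) (st j))
          * ∏ j : V,
              ∑ sj : S j, ∑ stj : S j,
                ∏ c : {c : F // (j, c) ∈ E},
                  φ j c.1 sj stj (t ⟨(j, c.1), c.2⟩) (tt ⟨(j, c.1), c.2⟩) := by
  classical
  symm
  calc
    ∑ t : ∀ e : {p : V × F // p ∈ E}, T e.1.1 e.1.2,
        ∑ tt : ∀ e : {p : V × F // p ∈ E}, T e.1.1 e.1.2,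
          (∏ a : F,
            ∑ s : ∀ j : {j : V // (j, a) ∈ E}, S j.1,
            ∑ st : ∀ j : {j : V // (j, a) ∈ E}, S j.1,
              f a s st *
                ∏ j : {j : V // (j, a) ∈ E},
                  φh j.1 a (t ⟨(j.1, a), j.2⟩) (tt ⟨(j.1, a), j.2⟩) (s j) (st j))
          * ∏ j : V,
              ∑ sj : S j, ∑ stj : S j,
                ∏ c : {c : F // (j, c) ∈ E},
                  φ j c.1 sj stj (t ⟨(j, c.1), c.2⟩) (tt ⟨(j, c.1), c.2⟩)
      = ∑ t : ∀ e : {p : V × F // p ∈ E}, T e.1.1 e.1.2,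
        ∑ tt : ∀ e : {p : V × F // p ∈ E}, T e.1.1 e.1.2,
        ∑ σ : ∀ a : F, (∀ j : {j : V // (j, a) ∈ E}, S j.1) × (∀ j : {j : V // (j, a) ∈ E}, S j.1),
        ∑ τ : ∀ j : V, S j × S j,
          (∏ a : F, f a (σ a).1 (σ a).2) *
            ∏ e : {p : V × F // p ∈ E},
              (φ e.1.1 e.1.2 (τ e.1.1).1 (τ e.1.1).2 (t e) (tt e) *
                φh e.1.1 e.1.2 (t e) (tt e) ((σ e.1.2).1 ⟨e.1.1, e.2⟩) ((σ e.1.2).2 ⟨e.1.1, e.2⟩)) := by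
        refine Finset.sum_congr rfl fun t _ => Finset.sum_congr rfl fun tt _ => ?_
        have hA : (∏ a : F,
            ∑ s : ∀ j : {j : V // (j, a) ∈ E}, S j.1,
            ∑ st : ∀ j : {j : V // (j, a) ∈ E}, S j.1,
              f a s st *
                ∏ j : {j : V // (j, a) ∈ E},
                  φh j.1 a (t ⟨(j.1, a), j.2⟩) (tt ⟨(j.1, a), j.2⟩) (s j) (st j))
            = ∑ σ : ∀ a : F, (∀ j : {j : V // (j, a) ∈ E}, S j.1) × (∀ j : {j : V // (j, a) ∈ E}, S j.1),
                (∏ a : F, f a (σ a).1 (σ a).2) *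
                  ∏ e : {p : V × F // p ∈ E},
                    φh e.1.1 e.1.2 (t e) (tt e) ((σ e.1.2).1 ⟨e.1.1, e.2⟩) ((σ e.1.2).2 ⟨e.1.1, e.2⟩) := by
          have h1 : ∀ a : F,
              (∑ s : ∀ j : {j : V // (j, a) ∈ E}, S j.1,
               ∑ st : ∀ j : {j : V // (j, a) ∈ E}, S j.1,
                f a s st *
                  ∏ j : {j : V // (j, a) ∈ E},
                    φh j.1 a (t ⟨(j.1, a), j.2⟩) (tt ⟨(j.1, a), j.2⟩) (s j) (st j))
              = ∑ p : (∀ j : {j : V // (j, a) ∈ E}, S j.1) × (∀ j : {j : V // (j, a) ∈ E}, S j.1),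
                  f a p.1 p.2 *
                    ∏ j : {j : V // (j, a) ∈ E},
                      φh j.1 a (t ⟨(j.1, a), j.2⟩) (tt ⟨(j.1, a), j.2⟩) (p.1 j) (p.2 j) :=
            fun a => (Fintype.sum_prod_type'
              (f := fun (s st : ∀ j : {j : V // (j, a) ∈ E}, S j.1) =>
                f a s st * ∏ j : {j : V // (j, a) ∈ E},
                  φh j.1 a (t ⟨(j.1, a), j.2⟩) (tt ⟨(j.1, a), j.2⟩) (s j) (st j))).symm
          rw [Finset.prod_congr rfl fun a _ => h1 a, prod_sum_pi]
          refine Finset.sum_congr rfl fun σ _ => ?_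
          rw [Finset.prod_mul_distrib]
          congr 1
          rw [Finset.prod_sigma', Finset.univ_sigma_univ]
          exact Equiv.prod_comp (facEquiv E)
            (fun e : {p : V × F // p ∈ E} =>
              φh e.1.1 e.1.2 (t e) (tt e) ((σ e.1.2).1 ⟨e.1.1, e.2⟩) ((σ e.1.2).2 ⟨e.1.1, e.2⟩))
        have hB : (∏ j : V,
              ∑ sj : S j, ∑ stj : S j,
                ∏ c : {c : F // (j, c) ∈ E},
                  φ j c.1 sj stj (t ⟨(j, c.1), c.2⟩) (tt ⟨(j, c.1), c.2⟩))
            = ∑ τ : ∀ j : V, S j × S j,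
                ∏ e : {p : V × F // p ∈ E},
                  φ e.1.1 e.1.2 (τ e.1.1).1 (τ e.1.1).2 (t e) (tt e) := by
          have h1 : ∀ j : V,
              (∑ sj : S j, ∑ stj : S j,
                ∏ c : {c : F // (j, c) ∈ E},
                  φ j c.1 sj stj (t ⟨(j, c.1), c.2⟩) (tt ⟨(j, c.1), c.2⟩))
              = ∑ p : S j × S j,
                  ∏ c : {c : F // (j, c) ∈ E},
                    φ j c.1 p.1 p.2 (t ⟨(j, c.1), c.2⟩) (tt ⟨(j, c.1), c.2⟩) :=
            fun j => (Fintype.sum_prod_type'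
              (f := fun (sj stj : S j) =>
                ∏ c : {c : F // (j, c) ∈ E},
                  φ j c.1 sj stj (t ⟨(j, c.1), c.2⟩) (tt ⟨(j, c.1), c.2⟩))).symm
          rw [Finset.prod_congr rfl fun j _ => h1 j, prod_sum_pi]
          refine Finset.sum_congr rfl fun τ _ => ?_
          rw [Finset.prod_sigma', Finset.univ_sigma_univ]
          exact Equiv.prod_comp (verEquiv E)
            (fun e : {p : V × F // p ∈ E} =>
              φ e.1.1 e.1.2 (τ e.1.1).1 (τ e.1.1).2 (t e) (tt e))
        rw [hA, hB, Finset.sum_mul_sum]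
        refine Finset.sum_congr rfl fun σ _ => Finset.sum_congr rfl fun τ _ => ?_
        rw [Finset.prod_mul_distrib]
        ring
    _ = ∑ σ : ∀ a : F, (∀ j : {j : V // (j, a) ∈ E}, S j.1) × (∀ j : {j : V // (j, a) ∈ E}, S j.1),
        ∑ τ : ∀ j : V, S j × S j,
          (∏ a : F, f a (σ a).1 (σ a).2) *
            ∏ e : {p : V × F // p ∈ E},
              ((if (τ e.1.1).1 = (σ e.1.2).1 ⟨e.1.1, e.2⟩ then (1:ℂ) else 0) *
               (if (τ e.1.1).2 = (σ e.1.2).2 ⟨e.1.1, e.2⟩ then (1:ℂ) else 0)) := by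
        rw [Finset.sum_comm]
        rw [Finset.sum_congr rfl fun tt _ => Finset.sum_comm]
        rw [Finset.sum_comm]
        refine Finset.sum_congr rfl fun σ _ => ?_
        rw [Finset.sum_congr rfl fun tt _ => Finset.sum_comm]
        rw [Finset.sum_comm]
        refine Finset.sum_congr rfl fun τ _ => ?_
        simp only [← Finset.mul_sum]
        congr 1
        rw [sum_sum_prod (fun (e : {p : V × F // p ∈ E}) a b =>
          φ e.1.1 e.1.2 (τ e.1.1).1 (τ e.1.1).2 b a *
            φh e.1.1 e.1.2 b a ((σ e.1.2).1 ⟨e.1.1, e.2⟩) ((σ e.1.2).2 ⟨e.1.1, e.2⟩))]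
        refine Finset.prod_congr rfl fun e _ => ?_
        rw [Finset.sum_comm]
        exact hinv e.1.1 e.1.2 e.2 (τ e.1.1).1 (τ e.1.1).2 _ _
    _ = ∑ τ : ∀ j : V, S j × S j,
          ∏ a : F, f a (fun j => (τ j.1).1) (fun j => (τ j.1).2) := by
        rw [Finset.sum_comm]
        refine Finset.sum_congr rfl fun τ _ => ?_
        have hσ : ∀ σ : ∀ a : F, (∀ j : {j : V // (j, a) ∈ E}, S j.1) × (∀ j : {j : V // (j, a) ∈ E}, S j.1),
            (∏ e : {p : V × F // p ∈ E},
              ((if (τ e.1.1).1 = (σ e.1.2).1 ⟨e.1.1, e.2⟩ then (1:ℂ) else 0) *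
               (if (τ e.1.1).2 = (σ e.1.2).2 ⟨e.1.1, e.2⟩ then (1:ℂ) else 0)))
            = if σ = (fun a => ((fun j : {j : V // (j, a) ∈ E} => (τ j.1).1),
                        (fun j : {j : V // (j, a) ∈ E} => (τ j.1).2))) then 1 else 0 := by
          intro σ
          have : ∀ e : {p : V × F // p ∈ E},
              ((if (τ e.1.1).1 = (σ e.1.2).1 ⟨e.1.1, e.2⟩ then (1:ℂ) else 0) *
               (if (τ e.1.1).2 = (σ e.1.2).2 ⟨e.1.1, e.2⟩ then (1:ℂ) else 0))
              = if ((τ e.1.1).1 = (σ e.1.2).1 ⟨e.1.1, e.2⟩ ∧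
                    (τ e.1.1).2 = (σ e.1.2).2 ⟨e.1.1, e.2⟩) then (1:ℂ) else 0 := by
            intro e
            by_cases h1 : (τ e.1.1).1 = (σ e.1.2).1 ⟨e.1.1, e.2⟩ <;>
              by_cases h2 : (τ e.1.1).2 = (σ e.1.2).2 ⟨e.1.1, e.2⟩ <;>
                simp [h1, h2]
          rw [Finset.prod_congr rfl fun e _ => this e, Fintype.prod_boole]
          congr 1
          simp only [eq_iff_iff]
          constructor
          · intro h
            funext a
            refine Prod.ext ?_ ?_ <;> · funext j
                                        have := h ⟨(j.1, a), j.2⟩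
                                        simp only at this
                                        first
                                          | exact this.1.symm
                                          | exact this.2.symm
          · rintro rfl e
            exact ⟨rfl, rfl⟩
        rw [Finset.sum_eq_single
            (fun a => ((fun j : {j : V // (j, a) ∈ E} => (τ j.1).1),
              (fun j : {j : V // (j, a) ∈ E} => (τ j.1).2)))
            (fun b _ hb => by rw [hσ b, if_neg hb, mul_zero])
            (fun h => absurd (Finset.mem_univ _) h)]
        simp
    _ = ∑ s : ∀ j : V, S j, ∑ st : ∀ j : V, S j,
        ∏ a : F, f a (fun j => s j.1) (fun j => st j.1) := by
        calc ∑ τ : ∀ j : V, S j × S j,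
              ∏ a : F, f a (fun j => (τ j.1).1) (fun j => (τ j.1).2)
            = ∑ p : (∀ j : V, S j) × (∀ j : V, S j),
                ∏ a : F, f a (fun j => p.1 j.1) (fun j => p.2 j.1) :=
              Equiv.sum_comp (pairPiEquiv S)
                (fun p : (∀ j : V, S j) × (∀ j : V, S j) =>
                  ∏ a : F, f a (fun j => p.1 j.1) (fun j => p.2 j.1))
          _ = ∑ s : ∀ j : V, S j, ∑ st : ∀ j : V, S j,
                ∏ a : F, f a (fun j => s j.1) (fun j => st j.1) :=
              Fintype.sum_prod_type'
                (f := fun (s st : ∀ j : V, S j) =>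
                  ∏ a : F, f a (fun j => s j.1) (fun j => st j.1))
end

section
/- (Every CC-QSC arises from a quantum channel with memory.) Let X and Y be finite alphabets, d ≥ 1, and let a CC-QSC be given by Kraus families {F_k^{y|x}}_k of d×d complex matrices satisfying ∑_{y∈Y} ∑_k (F_k^{y|x})ᴴ F_k^{y|x} = I for every x ∈ X. Then there exists a finite family {G_m} of complex matrices with rows indexed by Y×{1,…,d} and columns indexed by X×{1,…,d}, satisfying ∑_m G_mᴴ G_m = I (so that M ↦ ∑_m G_m M G_mᴴ is a completely positive trace-preserving map, i.e. a quantum channel, by the Kraus characterization), such that for every x ∈ X and every d×d complex matrix ρ: ∑_m G_m (E_{xx} ⊗ ρ) G_mᴴ = ∑_{y∈Y} E_{yy} ⊗ (∑_k F_k^{y|x} ρ (F_k^{y|x})ᴴ), where E_{xx} (resp. E_{yy}) denotes the standard matrix unit with a single 1 in position (x,x) (resp. (y,y)) and ⊗ is the Kronecker product. In words: every CC-QSC is realized by a quantum channel with memory together with the orthonormal ensemble {|x⟩⟨x|}_{x∈X} and the projective measurement {|y⟩⟨y|}_{y∈Y}. -/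
open Matrix
open scoped Kronecker

private lemma kron_conjT {l m n p : Type*} (A : Matrix l m ℂ) (B : Matrix n p ℂ) :
    (A ⊗ₖ B)ᴴ = Aᴴ ⊗ₖ Bᴴ := by
  ext ⟨i, j⟩ ⟨k, r⟩
  simp [conjTranspose_apply, Matrix.kroneckerMap_apply, star_mul']

private lemma stdBasis_conjT {n m : Type*} [DecidableEq n] [DecidableEq m] (i : n) (j : m) :
    (Matrix.single i j (1 : ℂ))ᴴ = Matrix.single j i (1 : ℂ) := by
  ext a b
  simp [conjTranspose_apply, Matrix.single, apply_ite (star : ℂ → ℂ), and_comm]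

private lemma kron_sum_right {l m n p ι : Type*} [Fintype ι] (A : Matrix l m ℂ)
    (B : ι → Matrix n p ℂ) : (∑ i, A ⊗ₖ B i) = A ⊗ₖ ∑ i, B i := by
  ext ⟨a, b⟩ ⟨c, e⟩
  simp [Matrix.kroneckerMap_apply, Finset.mul_sum, Matrix.sum_apply]

private lemma kron_sum_left {l m n p ι : Type*} [Fintype ι] (A : ι → Matrix l m ℂ)
    (B : Matrix n p ℂ) : (∑ i, A i ⊗ₖ B) = (∑ i, A i) ⊗ₖ B := by
  ext ⟨a, b⟩ ⟨c, e⟩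
  simp [Matrix.kroneckerMap_apply, Finset.sum_mul, Matrix.sum_apply]

private lemma sum_stdBasis_diag {n : Type*} [Fintype n] [DecidableEq n] :
    (∑ i : n, Matrix.single i i (1 : ℂ)) = 1 := by
  ext a b
  by_cases h : a = b
  · subst h
    simp [Matrix.sum_apply, Matrix.single, one_apply]
  · rw [Matrix.sum_apply]
    rw [Finset.sum_eq_zero fun i _ => Matrix.single_apply_of_ne _ _ _ _ _ (by rintro ⟨rfl, rfl⟩; exact h rfl)]
    simp [one_apply, h]

private lemma stdBasis_mul_ite {m n p : Type*} [Fintype n] [DecidableEq m] [DecidableEq n]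
    [DecidableEq p] (i : m) (j j' : n) (k : p) :
    Matrix.single i j (1:ℂ) * Matrix.single j' k (1:ℂ)
      = if j = j' then Matrix.single i k (1:ℂ) else 0 := by
  ext a b
  simp only [Matrix.mul_apply, Matrix.single, of_apply, ite_and, ite_mul, zero_mul, one_mul]
  by_cases hia : i = a <;> by_cases hkb : k = b <;> by_cases hjj : j = j' <;>
    simp [hia, hkb, hjj, eq_comm]

/-- Every CC-QSC arises from a quantum channel with memory: given Kraus families
`{F_k^{y|x}}_k` of `d×d` matrices with `∑_{y}∑_k (F_k^{y|x})ᴴ F_k^{y|x} = I` for every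
`x`, there is a finite Kraus family `{G_m}` of matrices from `X ⊗ ℂ^d` to `Y ⊗ ℂ^d` with
`∑_m G_mᴴ G_m = I` (hence a CPTP map `M ↦ ∑_m G_m M G_mᴴ`) realizing the CC-QSC on the
orthonormal ensemble `{|x⟩⟨x|}` and the projective measurement `{|y⟩⟨y|}`. -/
theorem stmt16 {X Y : Type} [Fintype X] [Fintype Y] [DecidableEq X] [DecidableEq Y]
    (d : ℕ) (hd : 1 ≤ d)
    (κ : X → Y → Type) [∀ x y, Fintype (κ x y)]
    (Fk : ∀ (x : X) (y : Y), κ x y → Matrix (Fin d) (Fin d) ℂ)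
    (hnorm : ∀ x : X, ∑ y : Y, ∑ k : κ x y, (Fk x y k)ᴴ * Fk x y k = 1) :
    ∃ (M : ℕ) (G : Fin M → Matrix (Y × Fin d) (X × Fin d) ℂ),
      (∑ m : Fin M, (G m)ᴴ * G m = 1) ∧
      ∀ (x : X) (ρ : Matrix (Fin d) (Fin d) ℂ),
        ∑ m : Fin M, G m * (Matrix.single x x 1 ⊗ₖ ρ) * (G m)ᴴ =
          ∑ y : Y, Matrix.single y y 1 ⊗ₖ
            (∑ k : κ x y, Fk x y k * ρ * (Fk x y k)ᴴ) := by
  classical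
  let g : (Σ x : X, Σ y : Y, κ x y) → Matrix (Y × Fin d) (X × Fin d) ℂ :=
    fun s => Matrix.single s.2.1 s.1 (1 : ℂ) ⊗ₖ Fk s.1 s.2.1 s.2.2
  refine ⟨Fintype.card (Σ x : X, Σ y : Y, κ x y),
    fun m => g ((Fintype.equivFin _).symm m), ?_, ?_⟩
  · rw [(Fintype.equivFin _).symm.sum_comp (fun s => (g s)ᴴ * g s)]
    rw [← Finset.univ_sigma_univ, Finset.sum_sigma]
    have : ∀ x : X, (∑ s : Σ y : Y, κ x y, (g ⟨x, s⟩)ᴴ * g ⟨x, s⟩)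
        = Matrix.single x x (1 : ℂ) ⊗ₖ (1 : Matrix (Fin d) (Fin d) ℂ) := by
      intro x
      rw [← Finset.univ_sigma_univ, Finset.sum_sigma]
      calc ∑ y : Y, ∑ k : κ x y, (g ⟨x, y, k⟩)ᴴ * g ⟨x, y, k⟩
          = ∑ y : Y, ∑ k : κ x y,
            Matrix.single x x (1 : ℂ) ⊗ₖ ((Fk x y k)ᴴ * Fk x y k) := by
            refine Finset.sum_congr rfl fun y _ => Finset.sum_congr rfl fun k _ => ?_
            show (Matrix.single y x (1:ℂ) ⊗ₖ Fk x y k)ᴴ *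
              (Matrix.single y x (1:ℂ) ⊗ₖ Fk x y k) = _
            simp [kron_conjT, stdBasis_conjT, ← Matrix.mul_kronecker_mul, stdBasis_mul_ite]
        _ = Matrix.single x x (1 : ℂ) ⊗ₖ (1 : Matrix (Fin d) (Fin d) ℂ) := by
            rw [← hnorm x]
            rw [Finset.sum_congr rfl fun y _ => kron_sum_right _ _, kron_sum_right]
    rw [Finset.sum_congr rfl fun x _ => this x, kron_sum_left, sum_stdBasis_diag,
      Matrix.one_kronecker_one]
  · intro x ρ
    rw [(Fintype.equivFin _).symm.sum_comp
      (fun s => g s * (Matrix.single x x 1 ⊗ₖ ρ) * (g s)ᴴ)]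
    rw [← Finset.univ_sigma_univ, Finset.sum_sigma]
    have key : ∀ x' : X, (∑ s : Σ y : Y, κ x' y,
        g ⟨x', s⟩ * (Matrix.single x x 1 ⊗ₖ ρ) * (g ⟨x', s⟩)ᴴ)
        = if x' = x then
            ∑ y : Y, Matrix.single y y (1 : ℂ) ⊗ₖ
              (∑ k : κ x y, Fk x y k * ρ * (Fk x y k)ᴴ)
          else 0 := by
      intro x'
      rw [← Finset.univ_sigma_univ, Finset.sum_sigma]
      by_cases hx : x' = x
      · subst hx
        rw [if_pos rfl]
        refine Finset.sum_congr rfl fun y _ => ?_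
        rw [← kron_sum_right]
        refine Finset.sum_congr rfl fun k _ => ?_
        show Matrix.single y x' (1:ℂ) ⊗ₖ Fk x' y k * (Matrix.single x' x' 1 ⊗ₖ ρ) *
          (Matrix.single y x' (1:ℂ) ⊗ₖ Fk x' y k)ᴴ = _
        simp [kron_conjT, stdBasis_conjT, ← Matrix.mul_kronecker_mul, stdBasis_mul_ite,
          Matrix.mul_assoc]
      · rw [if_neg hx]
        refine Finset.sum_eq_zero fun y _ => Finset.sum_eq_zero fun k _ => ?_
        show Matrix.single y x' (1:ℂ) ⊗ₖ Fk x' y k * (Matrix.single x x 1 ⊗ₖ ρ) *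
          (Matrix.single y x' (1:ℂ) ⊗ₖ Fk x' y k)ᴴ = 0
        simp [kron_conjT, stdBasis_conjT, ← Matrix.mul_kronecker_mul, stdBasis_mul_ite,
          Matrix.mul_assoc, hx, Ne.symm hx]
    rw [Finset.sum_congr rfl fun x' _ => key x']
    simp
end

section
/- (Information rate of an indecomposable CC-QSC is independent of the initial density operator.) Let a CC-QSC {N^{y|x}} with finite alphabets X, Y and memory dimension d be given, and let Q be a PMF on X. For a d×d density matrix ρ₀ and n ≥ 1, define the joint PMF on Xⁿ×Yⁿ by P_{ρ₀}(x₁…x_n, y₁…y_n) := (∏_{ℓ=1}^{n} Q(x_ℓ)) · tr(N^{y_n|x_n}(⋯ N^{y_1|x_1}(ρ₀) ⋯)), and set I⁽ⁿ⁾(ρ₀) := (1/n)·I(P_{ρ₀}), the normalized mutual information between the Xⁿ-block and the Yⁿ-block. Call the CC-QSC indecomposable if for all density matrices α₀, β₀ and every ε > 0 there exists N such that for all n ≥ N and all (x₁,…,x_n) ∈ Xⁿ one has ‖α_n^{(x)} − β_n^{(x)}‖₁ < ε, where α_n^{(x)} := ∑_{(y₁,…,y_n)∈Yⁿ} N^{y_n|x_n}(⋯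 N^{y_1|x_1}(α₀) ⋯) and β_n^{(x)} is defined analogously from β₀. Then, if the CC-QSC is indecomposable, for every pair of density matrices α₀, β₀ the difference I⁽ⁿ⁾(α₀) − I⁽ⁿ⁾(β₀) tends to 0 as n → ∞. -/
open Matrix Finset
open scoped ComplexOrder

/-- `evolve Nmap ρ₀ n x y = N^{y_n|x_n}(⋯ N^{y_1|x_1}(ρ₀) ⋯)`:
the iterated application of the channel maps along the input/output sequences,
with `N^{y_1|x_1}` applied first. -/
noncomputable def evolve {X Y : Type} {d : ℕ}
    (Nmap : X → Y → Matrix (Fin d) (Fin d) ℂ → Matrix (Fin d) (Fin d) ℂ)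
    (ρ0 : Matrix (Fin d) (Fin d) ℂ) :
    (n : ℕ) → (Fin n → X) → (Fin n → Y) → Matrix (Fin d) (Fin d) ℂ
  | 0, _, _ => ρ0
  | n + 1, x, y =>
      Nmap (x (Fin.last n)) (y (Fin.last n))
        (evolve Nmap ρ0 n (fun i => x i.castSucc) (fun i => y i.castSucc))

/-- The trace norm `‖M‖₁ = (1/2)·tr √(MᴴM)` of a complex matrix. -/
noncomputable def trNorm {n : Type*} [Fintype n] [DecidableEq n] (M : Matrix n n ℂ) : ℝ :=
  (((Matrix.posSemidef_conjTranspose_mul_self M).1.eigenvectorUnitary.1 *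
      diagonal (((↑) : ℝ → ℂ) ∘ (√·) ∘ (Matrix.posSemidef_conjTranspose_mul_self M).1.eigenvalues) *
      (star (Matrix.posSemidef_conjTranspose_mul_self M).1.eigenvectorUnitary : Matrix n n ℂ)).trace).re / 2

/-- The mutual information of a joint PMF `P` on a finite product set, with the
`0 · log 0 = 0` convention. -/
noncomputable def mutInfo {A B : Type*} [Fintype A] [Fintype B] (P : A → B → ℝ) : ℝ :=
  ∑ a : A, ∑ b : B,
    P a b * Real.log (P a b / ((∑ b' : B, P a b') * (∑ a' : A, P a' b)))


-- ## auxiliary lemmas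


lemma trace_conj_unitary {n : Type*} [Fintype n] [DecidableEq n]
    (U : Matrix.unitaryGroup n ℂ) (D : Matrix n n ℂ) :
    ((U : Matrix n n ℂ) * D * (star U : Matrix n n ℂ)).trace = D.trace := by
  rw [Matrix.trace_mul_comm, ← mul_assoc]
  have h : (star U : Matrix n n ℂ) * (U : Matrix n n ℂ) = 1 := by
    exact_mod_cast U.2.1
  rw [h, one_mul]

lemma trace_spectral {n : Type*} [Fintype n] [DecidableEq n] {M : Matrix n n ℂ}
    (hM : M.IsHermitian) : M.trace = ∑ i, (hM.eigenvalues i : ℂ) := by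
  conv_lhs => rw [hM.spectral_theorem, Unitary.conjStarAlgAut_apply]
  rw [trace_conj_unitary hM.eigenvectorUnitary (Matrix.diagonal (RCLike.ofReal ∘ hM.eigenvalues))]
  rw [Matrix.trace_diagonal]
  rfl

lemma psd_trace_re_nonneg {n : Type*} [Fintype n] [DecidableEq n] {M : Matrix n n ℂ}
    (hM : M.PosSemidef) : 0 ≤ (M.trace).re := by
  rw [trace_spectral hM.isHermitian]
  rw [Complex.re_sum]
  refine Finset.sum_nonneg fun i _ => ?_
  simpa using hM.eigenvalues_nonneg i

lemma conj_unitary_mul {n : Type*} [Fintype n] [DecidableEq n]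
    (U : Matrix.unitaryGroup n ℂ) (D1 D2 : Matrix n n ℂ) :
    ((U : Matrix n n ℂ) * D1 * (star U : Matrix n n ℂ)) *
      ((U : Matrix n n ℂ) * D2 * (star U : Matrix n n ℂ))
    = (U : Matrix n n ℂ) * (D1 * D2) * (star U : Matrix n n ℂ) := by
  have h : (star U : Matrix n n ℂ) * (U : Matrix n n ℂ) = 1 := by exact_mod_cast U.2.1
  calc ((U : Matrix n n ℂ) * D1 * (star U : Matrix n n ℂ)) *
      ((U : Matrix n n ℂ) * D2 * (star U : Matrix n n ℂ))
      = (U : Matrix n n ℂ) * D1 * ((star U : Matrix n n ℂ) * (U : Matrix n n ℂ)) * D2 *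
        (star U : Matrix n n ℂ) := by
        simp only [mul_assoc]
    _ = _ := by rw [h, mul_one]; simp only [mul_assoc]

lemma hermitian_decomp {n : Type*} [Fintype n] [DecidableEq n]
    (Δ : Matrix n n ℂ) (hΔ : Δ.IsHermitian) :
    ∃ P Q : Matrix n n ℂ, P.PosSemidef ∧ Q.PosSemidef ∧ Δ = P - Q ∧
      (P.trace).re + (Q.trace).re ≤ 2 * trNorm Δ := by
  set U := hΔ.eigenvectorUnitary with hU
  set ev := hΔ.eigenvalues with hev
  set P := (U : Matrix n n ℂ) * Matrix.diagonal (fun i => ((max (ev i) 0 : ℝ) : ℂ)) *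
      (star U : Matrix n n ℂ) with hP
  set Q := (U : Matrix n n ℂ) * Matrix.diagonal (fun i => ((max (-ev i) 0 : ℝ) : ℂ)) *
      (star U : Matrix n n ℂ) with hQ
  have hPsd : ∀ f : n → ℝ, (∀ i, 0 ≤ f i) →
      (((U : Matrix n n ℂ) * Matrix.diagonal (fun i => ((f i : ℝ) : ℂ)) *
        (star U : Matrix n n ℂ))).PosSemidef := by
    intro f hf
    have hd : Matrix.PosSemidef (Matrix.diagonal (fun i => ((f i : ℝ) : ℂ))) := by
      refine Matrix.posSemidef_diagonal_iff.mpr fun i => ?_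
      exact_mod_cast Complex.zero_le_real.mpr (hf i)
    simpa [Matrix.star_eq_conjTranspose] using hd.mul_mul_conjTranspose_same (U : Matrix n n ℂ)
  have hPpsd : P.PosSemidef := hPsd _ (fun i => le_max_right _ _)
  have hQpsd : Q.PosSemidef := hPsd _ (fun i => le_max_right _ _)
  have hPQ : Δ = P - Q := by
    rw [hP, hQ, ← Matrix.sub_mul, ← Matrix.mul_sub, Matrix.diagonal_sub]
    have : (fun i => ((max (ev i) 0 : ℝ) : ℂ) - ((max (-ev i) 0 : ℝ) : ℂ))
        = RCLike.ofReal ∘ ev := by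
      funext i
      push_cast
      rw [← Complex.ofReal_sub, max_zero_sub_max_neg_zero_eq_self]
      rfl
    rw [this]
    exact hΔ.spectral_theorem
  -- compute the trace norm
  set R := (U : Matrix n n ℂ) * Matrix.diagonal (fun i => ((|ev i| : ℝ) : ℂ)) *
      (star U : Matrix n n ℂ) with hR
  have hRpsd : R.PosSemidef := hPsd _ (fun i => abs_nonneg _)
  have hsq : R ^ 2 = Δᴴ * Δ := by
    rw [pow_two, hR, conj_unitary_mul, hΔ.eq]
    conv_rhs => rw [hΔ.spectral_theorem, Unitary.conjStarAlgAut_apply]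
    rw [conj_unitary_mul, Matrix.diagonal_mul_diagonal, Matrix.diagonal_mul_diagonal]
    have heq : (fun i => ((|ev i| : ℝ) : ℂ) * ((|ev i| : ℝ) : ℂ))
        = (fun i => ((RCLike.ofReal ∘ ev) i) * ((RCLike.ofReal ∘ ev) i)) := by
      funext i
      simp only [Function.comp_apply]
      norm_cast
      rw [← sq, ← sq, sq_abs]
      rfl
    rw [heq]
  have hsqrt : R = ((Matrix.posSemidef_conjTranspose_mul_self Δ).1.eigenvectorUnitary.1 *
      diagonal (((↑) : ℝ → ℂ) ∘ (√·) ∘ (Matrix.posSemidef_conjTranspose_mul_self Δ).1.eigenvalues) *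
      (star (Matrix.posSemidef_conjTranspose_mul_self Δ).1.eigenvectorUnitary : Matrix n n ℂ)) := by
    have hA : IsSelfAdjoint Δ := hΔ
    have e1 : ((Matrix.posSemidef_conjTranspose_mul_self Δ).1.eigenvectorUnitary.1 *
        diagonal (((↑) : ℝ → ℂ) ∘ (√·) ∘ (Matrix.posSemidef_conjTranspose_mul_self Δ).1.eigenvalues) *
        (star (Matrix.posSemidef_conjTranspose_mul_self Δ).1.eigenvectorUnitary : Matrix n n ℂ))
        = cfc Real.sqrt (Δᴴ * Δ) := by
      rw [(Matrix.posSemidef_conjTranspose_mul_self Δ).1.cfc_eq, Matrix.IsHermitian.cfc,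
        Unitary.conjStarAlgAut_apply]
      rfl
    rw [e1, hΔ.eq]
    have e2 : Δ * Δ = cfc (fun x : ℝ => x * x) Δ := by
      rw [cfc_mul (fun x : ℝ => x) (fun x : ℝ => x) Δ, cfc_id' (R := ℝ) (a := Δ)]
    rw [e2, ← cfc_comp' Real.sqrt (fun x : ℝ => x * x) Δ]
    rw [cfc_congr (g := fun x : ℝ => |x|) (fun x _ => Real.sqrt_mul_self_eq_abs x)]
    rw [hΔ.cfc_eq, Matrix.IsHermitian.cfc, Unitary.conjStarAlgAut_apply, hR]
    rfl
  have htrR : (R.trace).re = ∑ i, |ev i| := by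
    rw [hR, trace_conj_unitary, Matrix.trace_diagonal, Complex.re_sum]
    exact Finset.sum_congr rfl fun i _ => by simp
  have htrP : (P.trace).re = ∑ i, max (ev i) 0 := by
    rw [hP, trace_conj_unitary, Matrix.trace_diagonal, Complex.re_sum]
    exact Finset.sum_congr rfl fun i _ => by simp
  have htrQ : (Q.trace).re = ∑ i, max (-ev i) 0 := by
    rw [hQ, trace_conj_unitary, Matrix.trace_diagonal, Complex.re_sum]
    exact Finset.sum_congr rfl fun i _ => by simp
  refine ⟨P, Q, hPpsd, hQpsd, hPQ, ?_⟩
  rw [htrP, htrQ, trNorm, ← hsqrt, htrR]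
  rw [← Finset.sum_add_distrib]
  rw [Finset.sum_congr rfl fun i _ => max_zero_add_max_neg_zero_eq_abs_self (ev i)]
  ring_nf
  exact le_rfl



variable {X Y : Type} {d : ℕ}
  (Nmap : X → Y → Matrix (Fin d) (Fin d) ℂ → Matrix (Fin d) (Fin d) ℂ)

lemma evolve_sub (hN : ∀ x y ρ ρ', Nmap x y (ρ - ρ') = Nmap x y ρ - Nmap x y ρ')
    (ρ ρ' : Matrix (Fin d) (Fin d) ℂ) :
    ∀ (n : ℕ) (x : Fin n → X) (y : Fin n → Y),
      evolve Nmap (ρ - ρ') n x y = evolve Nmap ρ n x y - evolve Nmap ρ' n x y := by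
  intro n
  induction n with
  | zero => intro x y; rfl
  | succ n ih =>
      intro x y
      show Nmap _ _ (evolve Nmap (ρ - ρ') n _ _) = _
      rw [ih, hN]
      rfl

lemma evolve_sum {ι : Type*} (s : Finset ι)
    (hN : ∀ x y (g : ι → Matrix (Fin d) (Fin d) ℂ),
      Nmap x y (∑ i ∈ s, g i) = ∑ i ∈ s, Nmap x y (g i))
    (f : ι → Matrix (Fin d) (Fin d) ℂ) :
    ∀ (n : ℕ) (x : Fin n → X) (y : Fin n → Y),
      evolve Nmap (∑ i ∈ s, f i) n x y = ∑ i ∈ s, evolve Nmap (f i) n x y := by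
  intro n
  induction n with
  | zero => intro x y; rfl
  | succ n ih =>
      intro x y
      show Nmap _ _ (evolve Nmap (∑ i ∈ s, f i) n _ _) = _
      rw [ih, hN]
      rfl

lemma evolve_psd (hN : ∀ x y ρ, ρ.PosSemidef → (Nmap x y ρ).PosSemidef)
    {ρ : Matrix (Fin d) (Fin d) ℂ} (hρ : ρ.PosSemidef) :
    ∀ (n : ℕ) (x : Fin n → X) (y : Fin n → Y), (evolve Nmap ρ n x y).PosSemidef := by
  intro n
  induction n with
  | zero => intro x y; exact hρ
  | succ n ih => intro x y; exact hN _ _ _ (ih _ _)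

lemma evolve_trace_sum [Fintype Y] (hN : ∀ x ρ, ∑ y : Y, (Nmap x y ρ).trace = ρ.trace)
    (ρ : Matrix (Fin d) (Fin d) ℂ) :
    ∀ (n : ℕ) (x : Fin n → X),
      ∑ y : Fin n → Y, (evolve Nmap ρ n x y).trace = ρ.trace := by
  intro n
  induction n with
  | zero =>
      intro x
      rw [Fintype.sum_unique]
      rfl
  | succ n ih =>
      intro x
      rw [← Equiv.sum_comp (Fin.snocEquiv (fun _ : Fin (n + 1) => Y))
        (fun y => (evolve Nmap ρ (n+1) x y).trace)]
      rw [Fintype.sum_prod_type]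
      rw [Finset.sum_comm]
      have key : ∀ c : Fin n → Y, ∑ t : Y,
          (evolve Nmap ρ (n+1) x (Fin.snocEquiv (fun _ => Y) (t, c))).trace
          = (evolve Nmap ρ n (fun i => x i.castSucc) c).trace := by
        intro c
        have hy : ∀ t : Y, (evolve Nmap ρ (n+1) x (Fin.snocEquiv (fun _ => Y) (t, c)))
            = Nmap (x (Fin.last n)) t (evolve Nmap ρ n (fun i => x i.castSucc) c) := by
          intro t
          show Nmap (x (Fin.last n)) ((Fin.snocEquiv (fun _ => Y) (t, c)) (Fin.last n))
            (evolve Nmap ρ n _ (fun i => (Fin.snocEquiv (fun _ => Y) (t, c)) i.castSucc)) = _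
          simp only [Fin.snocEquiv_apply, Fin.snoc_last, Fin.snoc_castSucc]
        rw [Finset.sum_congr rfl fun t _ => congrArg Matrix.trace (hy t)]
        exact hN _ _
      rw [Finset.sum_congr rfl fun c _ => key c]
      exact ih _

lemma append_castSucc {m k : ℕ} {α : Type*} (a : Fin m → α) (b : Fin (k+1) → α)
    (i : Fin (m + k)) :
    Fin.append a b i.castSucc = Fin.append a (fun j => b j.castSucc) i := by
  refine Fin.addCases (fun i0 => ?_) (fun j => ?_) i
  · have h1 : (Fin.castAdd k i0).castSucc = Fin.castAdd (k+1) i0 := by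
      apply Fin.ext
      simp
    rw [h1, Fin.append_left, Fin.append_left]
  · have h2 : (Fin.natAdd m j).castSucc = Fin.natAdd m j.castSucc := by
      apply Fin.ext
      simp
    rw [h2, Fin.append_right, Fin.append_right]

lemma evolve_append (ρ : Matrix (Fin d) (Fin d) ℂ) (m : ℕ) :
    ∀ (k : ℕ) (a : Fin m → X) (b : Fin k → X) (c : Fin m → Y) (dy : Fin k → Y),
      evolve Nmap ρ (m + k) (Fin.append a b) (Fin.append c dy)
        = evolve Nmap (evolve Nmap ρ m a c) k b dy := by
  intro k
  induction k with
  | zero =>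
      intro a b c dy
      show evolve Nmap ρ m (Fin.append a b) (Fin.append c dy) = evolve Nmap ρ m a c
      have hb : Fin.append a b = a := by
        funext i
        have := Fin.append_right_nil a b rfl
        rw [this]
        rfl
      have hc : Fin.append c dy = c := by
        funext i
        have := Fin.append_right_nil c dy rfl
        rw [this]
        rfl
      rw [hb, hc]
  | succ k ih =>
      intro a b c dy
      show Nmap (Fin.append a b (Fin.last (m+k))) (Fin.append c dy (Fin.last (m+k)))
          (evolve Nmap ρ (m+k) (fun i => Fin.append a b i.castSucc)
            (fun i => Fin.append c dy i.castSucc)) = _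
      have hx : Fin.append a b (Fin.last (m+k)) = b (Fin.last k) := by
        have h1 : (Fin.last (m+k)) = Fin.natAdd m (Fin.last k) := by
          apply Fin.ext
          simp
        rw [h1, Fin.append_right]
      have hy : Fin.append c dy (Fin.last (m+k)) = dy (Fin.last k) := by
        have h1 : (Fin.last (m+k)) = Fin.natAdd m (Fin.last k) := by
          apply Fin.ext
          simp
        rw [h1, Fin.append_right]
      have hfx : (fun i : Fin (m+k) => Fin.append a b i.castSucc)
          = Fin.append a (fun j => b j.castSucc) := by
        funext i
        exact append_castSucc a b i
      have hfy : (fun i : Fin (m+k) => Fin.append c dy i.castSucc)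
          = Fin.append c (fun j => dy j.castSucc) := by
        funext i
        exact append_castSucc c dy i
      rw [hx, hy, hfx, hfy, ih]
      rfl




noncomputable def ent {S : Type*} [Fintype S] (p : S → ℝ) : ℝ := ∑ i, Real.negMulLog (p i)

lemma ent_le_log_card {S : Type*} [Fintype S] (p : S → ℝ)
    (h0 : ∀ i, 0 ≤ p i) (h1 : ∑ i, p i = 1) :
    ent p ≤ Real.log (Fintype.card S) := by
  have hS : 0 < (Fintype.card S : ℝ) := by
    rcases isEmpty_or_nonempty S with h | h
    · simp at h1
    · exact_mod_cast Fintype.card_pos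
  have key : ∀ i, Real.negMulLog (p i) ≤
      1 / (Fintype.card S : ℝ) - p i + p i * Real.log (Fintype.card S) := by
    intro i
    rcases eq_or_lt_of_le (h0 i) with h | h
    · rw [← h]
      simp only [Real.negMulLog_zero, mul_zero, sub_zero, add_zero]
      positivity
    · have hlog : Real.log (1 / ((Fintype.card S : ℝ) * p i)) ≤
          1 / ((Fintype.card S : ℝ) * p i) - 1 :=
        Real.log_le_sub_one_of_pos (by positivity)
    -- p * log(1/(N p)) ≤ 1/N - p
      have h2 : p i * Real.log (1 / ((Fintype.card S : ℝ) * p i)) ≤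
          1 / (Fintype.card S : ℝ) - p i := by
        calc p i * Real.log (1 / ((Fintype.card S : ℝ) * p i))
            ≤ p i * (1 / ((Fintype.card S : ℝ) * p i) - 1) := by
              exact mul_le_mul_of_nonneg_left hlog (le_of_lt h)
          _ = 1 / (Fintype.card S : ℝ) - p i := by
              field_simp
      have h3 : Real.log (1 / ((Fintype.card S : ℝ) * p i)) =
          - Real.log (Fintype.card S) - Real.log (p i) := by
        rw [one_div, Real.log_inv, Real.log_mul (ne_of_gt hS) (ne_of_gt h)]
        ring
      rw [h3] at h2
      unfold Real.negMulLog
      nlinarith [h2]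
  calc ent p ≤ ∑ i, (1 / (Fintype.card S : ℝ) - p i + p i * Real.log (Fintype.card S)) :=
        Finset.sum_le_sum fun i _ => key i
    _ = Real.log (Fintype.card S) := by
        rw [Finset.sum_add_distrib, Finset.sum_sub_distrib, ← Finset.sum_mul, h1]
        simp [Finset.sum_const, Finset.card_univ]
        field_simp
        ring

lemma marg_ent_le {S T : Type*} [Fintype S] [Fintype T] (r : S → T → ℝ)
    (h0 : ∀ s t, 0 ≤ r s t) :
    ∑ t, Real.negMulLog (∑ s, r s t) ≤ ∑ t, ∑ s, Real.negMulLog (r s t) := by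
  refine Finset.sum_le_sum fun t _ => ?_
  have hq : ∀ s : S, r s t ≤ ∑ s', r s' t := fun s =>
    Finset.single_le_sum (fun s' _ => h0 s' t) (mem_univ s)
  have : Real.negMulLog (∑ s, r s t) = ∑ s, -(r s t * Real.log (∑ s', r s' t)) := by
    rw [Real.negMulLog, neg_mul, Finset.sum_mul]
    rw [← Finset.sum_neg_distrib]
  rw [this]
  refine Finset.sum_le_sum fun s _ => ?_
  rcases eq_or_lt_of_le (h0 s t) with h | h
  · simp [← h]
  · rw [Real.negMulLog]
    have : Real.log (r s t) ≤ Real.log (∑ s', r s' t) := Real.log_le_log h (hq s)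
    nlinarith [this]

lemma joint_ent_le {S T : Type*} [Fintype S] [Fintype T] (r : S → T → ℝ)
    (h0 : ∀ s t, 0 ≤ r s t) (h1 : ∑ t, ∑ s, r s t = 1) :
    ∑ t, ∑ s, Real.negMulLog (r s t) ≤
      (∑ t, Real.negMulLog (∑ s, r s t)) + Real.log (Fintype.card S) := by
  have hNE : Nonempty S := by
    by_contra h
    rw [not_nonempty_iff] at h
    simp at h1
  have hN0 : (0:ℝ) ≤ Real.log (Fintype.card S) := by
    have : (1:ℝ) ≤ (Fintype.card S : ℝ) := by exact_mod_cast Fintype.card_pos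
    exact Real.log_nonneg this
  have key : ∀ t, ∑ s, Real.negMulLog (r s t) ≤
      Real.negMulLog (∑ s, r s t) + (∑ s, r s t) * Real.log (Fintype.card S) := by
    intro t
    set q := ∑ s, r s t with hq
    have hq0 : 0 ≤ q := Finset.sum_nonneg fun s _ => h0 s t
    rcases eq_or_lt_of_le hq0 with h | h
    · have : ∀ s, r s t = 0 := by
        intro s
        have := Finset.single_le_sum (fun s' _ => h0 s' t) (mem_univ s)
        have h0' := h0 s t
        rw [← hq] at this
        linarith [this, h.symm ▸ h0']
      simp [this, ← h]
    · -- q > 0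
      have hes : ∀ s, r s t = q * (r s t / q) := fun s => by field_simp
      have hdecomp : ∀ s, Real.negMulLog (r s t) =
          (r s t / q) * Real.negMulLog q + q * Real.negMulLog (r s t / q) := by
        intro s
        conv_lhs => rw [hes s]
        exact Real.negMulLog_mul q (r s t / q)
      have hsum : ∑ s, Real.negMulLog (r s t) =
          Real.negMulLog q + q * ent (fun s => r s t / q) := by
        rw [Finset.sum_congr rfl fun s _ => hdecomp s, Finset.sum_add_distrib,
          ← Finset.sum_mul, ← Finset.mul_sum]
        congr 1
        rw [← Finset.sum_div, ← hq, div_self (ne_of_gt h), one_mul]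
      rw [hsum]
      have := ent_le_log_card (fun s => r s t / q) (fun s => div_nonneg (h0 s t) hq0)
        (by rw [← Finset.sum_div, ← hq, div_self (ne_of_gt h)])
      nlinarith [this]
  calc ∑ t, ∑ s, Real.negMulLog (r s t)
      ≤ ∑ t, (Real.negMulLog (∑ s, r s t) + (∑ s, r s t) * Real.log (Fintype.card S)) :=
        Finset.sum_le_sum fun t _ => key t
    _ = (∑ t, Real.negMulLog (∑ s, r s t)) + Real.log (Fintype.card S) := by
        rw [Finset.sum_add_distrib, ← Finset.sum_mul, h1, one_mul]

lemma negMulLog_add_le (a d : ℝ) (ha : 0 ≤ a) (hd : 0 ≤ d) :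
    Real.negMulLog (a + d) ≤ Real.negMulLog a + Real.negMulLog d := by
  rcases eq_or_lt_of_le ha with h | h
  · simp [← h]
  rcases eq_or_lt_of_le hd with h' | h'
  · simp [← h']
  have key : Real.negMulLog (a + d) =
      -(a * Real.log (a + d)) + -(d * Real.log (a + d)) := by
    rw [Real.negMulLog]; ring
  rw [key, Real.negMulLog, Real.negMulLog]
  have h1 : Real.log a ≤ Real.log (a + d) := Real.log_le_log h (by linarith)
  have h2 : Real.log d ≤ Real.log (a + d) := Real.log_le_log h' (by linarith)
  nlinarith [h1, h2]

lemma abs_negMulLog_sub_le {a b : ℝ} (ha : 0 ≤ a) (ha1 : a ≤ 1) (hb : 0 ≤ b) (hb1 : b ≤ 1) :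
    |Real.negMulLog a - Real.negMulLog b| ≤ Real.negMulLog |a - b| + |a - b| := by
  -- reduce to the case a ≤ b
  wlog hab : a ≤ b generalizing a b
  · rw [abs_sub_comm (Real.negMulLog a), abs_sub_comm a]
    exact this hb hb1 ha ha1 (le_of_not_ge hab)
  set dd := b - a with hdd
  have hd0 : 0 ≤ dd := by linarith
  have habs : |a - b| = dd := by rw [abs_sub_comm, abs_of_nonneg hd0]
  rw [habs]
  have hdle1 : dd ≤ 1 := by linarith
  have hηd : 0 ≤ Real.negMulLog dd := Real.negMulLog_nonneg hd0 hdle1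
  rw [abs_le]
  constructor
  · -- -(η d + d) ≤ η a - η b, i.e. η b ≤ η a + η d + d
    have := negMulLog_add_le a dd ha hd0
    have hb' : b = a + dd := by rw [hdd]; ring
    rw [hb'] at *
    linarith
  · -- η a - η b ≤ η d + d ; show η a - η b ≤ d
    have key : Real.negMulLog a - Real.negMulLog b ≤ dd := by
      rcases eq_or_lt_of_le ha with h | h
      · -- a = 0
        have : Real.negMulLog b ≥ 0 := Real.negMulLog_nonneg hb hb1
        simp [← h]
        linarith
      · have hb0 : 0 < b := lt_of_lt_of_le h hab
        have h1 : Real.log b - Real.log a ≤ dd / a := by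
          rw [← Real.log_div (ne_of_gt hb0) (ne_of_gt h)]
          have := Real.log_le_sub_one_of_pos (show 0 < b / a by positivity)
          have : Real.log (b/a) ≤ b/a - 1 := this
          have heq : b / a - 1 = dd / a := by field_simp; exact hdd.symm
          linarith [heq ▸ this]
        have h2 : Real.log b ≤ 0 := Real.log_nonpos hb hb1
        rw [Real.negMulLog, Real.negMulLog]
        have hb' : b = a + dd := by rw [hdd]; ring
        have expand : -a * Real.log a - -b * Real.log b =
            a * (Real.log b - Real.log a) + dd * Real.log b := by
          rw [hb']; ring
        rw [expand]
        have t1 : a * (Real.log b - Real.log a) ≤ dd := by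
          calc a * (Real.log b - Real.log a) ≤ a * (dd / a) :=
                mul_le_mul_of_nonneg_left h1 ha
            _ = dd := by field_simp
        have t2 : dd * Real.log b ≤ 0 := mul_nonpos_of_nonneg_of_nonpos hd0 h2
        linarith
    linarith

lemma sum_negMulLog_le {S : Type*} [Fintype S] (dd : S → ℝ) (h0 : ∀ i, 0 ≤ dd i) :
    ∑ i, Real.negMulLog (dd i) ≤
      (∑ i, dd i) * Real.log (Fintype.card S) + 2 * Real.sqrt (∑ i, dd i) := by
  set δ := ∑ i, dd i with hδ
  have hδ0 : 0 ≤ δ := Finset.sum_nonneg fun i _ => h0 i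
  rcases eq_or_lt_of_le hδ0 with h | h
  · have hz : ∀ i, dd i = 0 := by
      intro i
      have h1 := Finset.single_le_sum (fun j _ => h0 j) (Finset.mem_univ i)
      rw [← hδ] at h1
      linarith [h0 i, h1, h.symm]
    simp [hz, ← h]
  · -- δ > 0
    have hdecomp : ∀ i, Real.negMulLog (dd i) =
        (dd i / δ) * Real.negMulLog δ + δ * Real.negMulLog (dd i / δ) := by
      intro i
      have : dd i = δ * (dd i / δ) := by field_simp
      conv_lhs => rw [this]
      exact Real.negMulLog_mul δ (dd i / δ)
    have hsum : ∑ i, Real.negMulLog (dd i) =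
        Real.negMulLog δ + δ * ent (fun i => dd i / δ) := by
      rw [Finset.sum_congr rfl fun i _ => hdecomp i, Finset.sum_add_distrib,
        ← Finset.sum_mul, ← Finset.mul_sum]
      congr 1
      rw [← Finset.sum_div, ← hδ, div_self (ne_of_gt h), one_mul]
    rw [hsum]
    have hent := ent_le_log_card (fun i => dd i / δ) (fun i => div_nonneg (h0 i) hδ0)
      (by rw [← Finset.sum_div, ← hδ, div_self (ne_of_gt h)])
    have hηδ : Real.negMulLog δ ≤ 2 * Real.sqrt δ := by
      rcases le_or_gt 1 δ with h1 | h1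
      · have : Real.log δ ≥ 0 := Real.log_nonneg h1
        have : Real.negMulLog δ ≤ 0 := by rw [Real.negMulLog]; nlinarith
        have := Real.sqrt_nonneg δ
        linarith
      · have hinvlog : Real.log (1/δ) ≤ 2 / Real.sqrt δ := by
          have hx : 0 < Real.sqrt (1/δ) := Real.sqrt_pos.2 (by positivity)
          have := Real.log_le_sub_one_of_pos hx
          have hlogsqrt : Real.log (Real.sqrt (1/δ)) = Real.log (1/δ) / 2 :=
            Real.log_sqrt (by positivity)
          have hsqrtinv : Real.sqrt (1/δ) = 1 / Real.sqrt δ := by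
            rw [one_div, Real.sqrt_inv, one_div]
          have h2d : 2 / Real.sqrt δ = 2 * (1 / Real.sqrt δ) := by ring
          rw [hlogsqrt, hsqrtinv] at this
          linarith [this, h2d, Real.sqrt_nonneg δ]
        have hlogneg : Real.negMulLog δ = δ * Real.log (1/δ) := by
          rw [Real.negMulLog, one_div, Real.log_inv]; ring
        rw [hlogneg]
        calc δ * Real.log (1/δ) ≤ δ * (2 / Real.sqrt δ) :=
              mul_le_mul_of_nonneg_left hinvlog hδ0
          _ = 2 * Real.sqrt δ := by
              rw [mul_div_assoc']
              rw [mul_comm δ 2, mul_div_assoc]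
              congr 1
              exact Real.div_sqrt
    have hcard0 : 0 ≤ Real.log (Fintype.card S) := by
      rcases isEmpty_or_nonempty S with hS | hS
      · simp [hδ] at h
      · have : (1:ℝ) ≤ (Fintype.card S : ℝ) := by exact_mod_cast Fintype.card_pos
        exact Real.log_nonneg this
    nlinarith [hent, hηδ, hδ0]

/-- Fannes-type continuity of entropy. -/
lemma fannes {S : Type*} [Fintype S] (p q : S → ℝ)
    (hp0 : ∀ i, 0 ≤ p i) (hp1 : ∑ i, p i = 1)
    (hq0 : ∀ i, 0 ≤ q i) (hq1 : ∑ i, q i = 1) :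
    |ent p - ent q| ≤ (∑ i, |p i - q i|) * Real.log (Fintype.card S)
      + 2 * Real.sqrt (∑ i, |p i - q i|) + (∑ i, |p i - q i|) := by
  have hple : ∀ i, p i ≤ 1 := fun i => by
    have := Finset.single_le_sum (fun j _ => hp0 j) (Finset.mem_univ i); linarith
  have hqle : ∀ i, q i ≤ 1 := fun i => by
    have := Finset.single_le_sum (fun j _ => hq0 j) (Finset.mem_univ i); linarith
  have step1 : |ent p - ent q| ≤ ∑ i, |Real.negMulLog (p i) - Real.negMulLog (q i)| := by
    rw [ent, ent, ← Finset.sum_sub_distrib]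
    exact Finset.abs_sum_le_sum_abs _ _
  have step2 : ∑ i, |Real.negMulLog (p i) - Real.negMulLog (q i)| ≤
      (∑ i, Real.negMulLog |p i - q i|) + ∑ i, |p i - q i| := by
    rw [← Finset.sum_add_distrib]
    exact Finset.sum_le_sum fun i _ =>
      abs_negMulLog_sub_le (hp0 i) (hple i) (hq0 i) (hqle i)
  have step3 := sum_negMulLog_le (fun i => |p i - q i|) (fun i => abs_nonneg _)
  calc |ent p - ent q| ≤ _ := step1
    _ ≤ _ := step2
    _ ≤ _ := by
        have := step3
        linarith

lemma mutInfo_eq_ent {A B : Type*} [Fintype A] [Fintype B] (P : A → B → ℝ)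
    (h0 : ∀ a b, 0 ≤ P a b) :
    mutInfo P = ent (fun a => ∑ b, P a b) + ent (fun b => ∑ a, P a b)
      - ∑ a, ∑ b, Real.negMulLog (P a b) := by
  have key : ∀ a b, P a b * Real.log (P a b / ((∑ b', P a b') * (∑ a', P a' b)))
      = - Real.negMulLog (P a b)
        - P a b * Real.log (∑ b', P a b') - P a b * Real.log (∑ a', P a' b) := by
    intro a b
    rcases eq_or_lt_of_le (h0 a b) with h | h
    · simp [← h]
    · have hPA : 0 < ∑ b', P a b' :=
        lt_of_lt_of_le h (Finset.single_le_sum (fun b' _ => h0 a b') (Finset.mem_univ b))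
      have hPB : 0 < ∑ a', P a' b :=
        lt_of_lt_of_le h (Finset.single_le_sum (fun a' _ => h0 a' b) (Finset.mem_univ a))
      rw [Real.log_div (ne_of_gt h) (by positivity),
        Real.log_mul (ne_of_gt hPA) (ne_of_gt hPB), Real.negMulLog]
      ring
  rw [mutInfo]
  rw [Finset.sum_congr rfl fun a _ => Finset.sum_congr rfl fun b _ => key a b]
  have e1 : ∑ a : A, ∑ b : B, (- Real.negMulLog (P a b)
        - P a b * Real.log (∑ b', P a b') - P a b * Real.log (∑ a', P a' b))
      = (∑ a : A, ∑ b : B, - Real.negMulLog (P a b))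
        - (∑ a : A, ∑ b : B, P a b * Real.log (∑ b', P a b'))
        - (∑ a : A, ∑ b : B, P a b * Real.log (∑ a', P a' b)) := by
    rw [← Finset.sum_sub_distrib, ← Finset.sum_sub_distrib]
    refine Finset.sum_congr rfl fun a _ => ?_
    rw [← Finset.sum_sub_distrib, ← Finset.sum_sub_distrib]
  rw [e1]
  have e2 : ∑ a : A, ∑ b : B, P a b * Real.log (∑ b', P a b')
      = - ent (fun a => ∑ b, P a b) := by
    rw [ent, ← Finset.sum_neg_distrib]
    refine Finset.sum_congr rfl fun a _ => ?_
    rw [Real.negMulLog, ← Finset.sum_mul]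
    ring
  have e3 : ∑ a : A, ∑ b : B, P a b * Real.log (∑ a', P a' b)
      = - ent (fun b => ∑ a, P a b) := by
    rw [Finset.sum_comm, ent, ← Finset.sum_neg_distrib]
    refine Finset.sum_congr rfl fun b _ => ?_
    rw [Real.negMulLog, ← Finset.sum_mul]
    ring
  rw [e2, e3]
  have e4 : ∑ a : A, ∑ b : B, - Real.negMulLog (P a b)
      = - ∑ a : A, ∑ b : B, Real.negMulLog (P a b) := by
    rw [← Finset.sum_neg_distrib]
    exact Finset.sum_congr rfl fun a _ => by rw [← Finset.sum_neg_distrib]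
  rw [e4]
  ring


section Aux
variable {X Y : Type} {d : ℕ}
  (Nmap : X → Y → Matrix (Fin d) (Fin d) ℂ → Matrix (Fin d) (Fin d) ℂ)

lemma map_finset_sum' (hadd : ∀ x y ρ ρ', Nmap x y (ρ + ρ') = Nmap x y ρ + Nmap x y ρ')
    (hzero : ∀ x y, Nmap x y 0 = 0) {ι : Type*} (s : Finset ι)
    (g : ι → Matrix (Fin d) (Fin d) ℂ) (x : X) (y : Y) :
    Nmap x y (∑ i ∈ s, g i) = ∑ i ∈ s, Nmap x y (g i) := by
  classical
  induction s using Finset.induction_on with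
  | empty => simpa using hzero x y
  | insert _ _ hni ih =>
      rw [Finset.sum_insert hni, hadd, ih, Finset.sum_insert hni]

lemma evolve_finset_sum (hadd : ∀ x y ρ ρ', Nmap x y (ρ + ρ') = Nmap x y ρ + Nmap x y ρ')
    (hzero : ∀ x y, Nmap x y 0 = 0) {ι : Type*} (s : Finset ι)
    (f : ι → Matrix (Fin d) (Fin d) ℂ) (n : ℕ) (x : Fin n → X) (y : Fin n → Y) :
    evolve Nmap (∑ i ∈ s, f i) n x y = ∑ i ∈ s, evolve Nmap (f i) n x y :=
  evolve_sum Nmap s (fun x y g => map_finset_sum' Nmap hadd hzero s g x y) f n x y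

/-- tail total-variation bound -/
lemma tail_tv [Fintype Y]
    (hN : ∀ x ρ, ∑ y : Y, (Nmap x y ρ).trace = ρ.trace)
    (hNsub : ∀ x y ρ ρ', Nmap x y (ρ - ρ') = Nmap x y ρ - Nmap x y ρ')
    (hNpsd : ∀ x y ρ, ρ.PosSemidef → (Nmap x y ρ).PosSemidef)
    (Δ : Matrix (Fin d) (Fin d) ℂ) (hΔ : Δ.IsHermitian)
    (k : ℕ) (x : Fin k → X) :
    ∑ y : Fin k → Y, |((evolve Nmap Δ k x y).trace).re| ≤ 2 * trNorm Δ := by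
  obtain ⟨P, Q₁, hP, hQ₁, hPQ, htr⟩ := hermitian_decomp Δ hΔ
  calc ∑ y : Fin k → Y, |((evolve Nmap Δ k x y).trace).re|
      ≤ ∑ y : Fin k → Y,
        (((evolve Nmap P k x y).trace).re + ((evolve Nmap Q₁ k x y).trace).re) := by
        refine Finset.sum_le_sum fun y _ => ?_
        have hsub : evolve Nmap Δ k x y = evolve Nmap P k x y - evolve Nmap Q₁ k x y := by
          rw [hPQ]; exact evolve_sub Nmap hNsub P Q₁ k x y
        rw [hsub, Matrix.trace_sub, Complex.sub_re]
        have h1 : 0 ≤ ((evolve Nmap P k x y).trace).re :=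
          psd_trace_re_nonneg (evolve_psd Nmap hNpsd hP k x y)
        have h2 : 0 ≤ ((evolve Nmap Q₁ k x y).trace).re :=
          psd_trace_re_nonneg (evolve_psd Nmap hNpsd hQ₁ k x y)
        rw [abs_sub_le_iff]
        constructor <;> linarith
    _ = (P.trace).re + (Q₁.trace).re := by
        rw [Finset.sum_add_distrib, ← Complex.re_sum, ← Complex.re_sum,
          evolve_trace_sum Nmap hN P k x, evolve_trace_sum Nmap hN Q₁ k x]
    _ ≤ 2 * trNorm Δ := htr

end Aux


section Main
variable {X Y : Type} [Fintype X] [Fintype Y] [DecidableEq X] [DecidableEq Y] {d : ℕ}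

lemma psd_finset_sum {ι : Type*} (s : Finset ι) (f : ι → Matrix (Fin d) (Fin d) ℂ)
    (hf : ∀ i ∈ s, (f i).PosSemidef) : (∑ i ∈ s, f i).PosSemidef := by
  classical
  induction s using Finset.induction_on with
  | empty =>
      simp only [Finset.sum_empty]
      exact ⟨Matrix.isHermitian_zero, fun x => by simp⟩
  | insert _ _ hni ih =>
      rw [Finset.sum_insert hni]
      exact (hf _ (Finset.mem_insert_self _ _)).add
        (ih fun i hi => hf i (Finset.mem_insert_of_mem hi))

lemma main_bound
    (Nmap : X → Y → Matrix (Fin d) (Fin d) ℂ → Matrix (Fin d) (Fin d) ℂ)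
    (hNadd : ∀ x y ρ ρ', Nmap x y (ρ + ρ') = Nmap x y ρ + Nmap x y ρ')
    (hNzero : ∀ x y, Nmap x y 0 = 0)
    (hNsub : ∀ x y ρ ρ', Nmap x y (ρ - ρ') = Nmap x y ρ - Nmap x y ρ')
    (hNpsd : ∀ x y ρ, ρ.PosSemidef → (Nmap x y ρ).PosSemidef)
    (hNtr : ∀ x ρ, ∑ y : Y, (Nmap x y ρ).trace = ρ.trace)
    (Q : X → ℝ) (hQ0 : ∀ x, 0 ≤ Q x) (hQ1 : ∑ x : X, Q x = 1)
    (hYne : Nonempty Y)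
    (α0 β0 : Matrix (Fin d) (Fin d) ℂ)
    (hα : α0.PosSemidef) (hα1 : α0.trace = 1)
    (hβ : β0.PosSemidef) (hβ1 : β0.trace = 1)
    (m k : ℕ) (δ : ℝ) (hδ0 : 0 ≤ δ)
    (hδ : ∀ x1 : Fin m → X,
      trNorm ((∑ c : Fin m → Y, evolve Nmap α0 m x1 c)
        - ∑ c : Fin m → Y, evolve Nmap β0 m x1 c) ≤ δ) :
    |mutInfo (fun (x : Fin (m+k) → X) (y : Fin (m+k) → Y) =>
        (∏ ℓ, Q (x ℓ)) * ((evolve Nmap α0 (m+k) x y).trace).re)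
     - mutInfo (fun (x : Fin (m+k) → X) (y : Fin (m+k) → Y) =>
        (∏ ℓ, Q (x ℓ)) * ((evolve Nmap β0 (m+k) x y).trace).re)|
    ≤ 4 * Real.log (Fintype.card (Fin m → Y))
      + 4 * δ * ((m + k) * Real.log (Fintype.card X * Fintype.card Y))
      + 4 * Real.sqrt (2 * δ) + 4 * δ := by
  classical
  have hXne : Nonempty X := by
    by_contra h
    rw [not_nonempty_iff] at h
    simp at hQ1
  -- abbreviations
  set PP : Matrix (Fin d) (Fin d) ℂ → (Fin (m+k) → X) → (Fin (m+k) → Y) → ℝ :=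
    fun ρ0 x y => (∏ ℓ, Q (x ℓ)) * ((evolve Nmap ρ0 (m+k) x y).trace).re with hPP
  -- nonnegativity of `Qⁿ`
  have hQn0 : ∀ x : Fin (m+k) → X, 0 ≤ ∏ ℓ, Q (x ℓ) :=
    fun x => Finset.prod_nonneg fun ℓ _ => hQ0 (x ℓ)
  have hQn1 : ∑ x : Fin (m+k) → X, ∏ ℓ, Q (x ℓ) = 1 := by
    have h := Finset.prod_univ_sum (fun _ : Fin (m+k) => (Finset.univ : Finset X))
      (fun _ j => Q j)
    rw [Fintype.piFinset_univ] at h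
    rw [← h, hQ1]
    simp
  -- generic facts about PP ρ0 for a density matrix ρ0
  have hP0 : ∀ ρ0 : Matrix (Fin d) (Fin d) ℂ, ρ0.PosSemidef →
      ∀ x y, 0 ≤ PP ρ0 x y := by
    intro ρ0 hρ x y
    exact mul_nonneg (hQn0 x) (psd_trace_re_nonneg (evolve_psd Nmap hNpsd hρ _ x y))
  have hPy : ∀ ρ0 : Matrix (Fin d) (Fin d) ℂ, ρ0.trace = 1 →
      ∀ x, ∑ y, PP ρ0 x y = ∏ ℓ, Q (x ℓ) := by
    intro ρ0 h1 x
    rw [← Finset.mul_sum, ← Complex.re_sum, evolve_trace_sum Nmap hNtr ρ0 _ x, h1]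
    simp
  have hPtot : ∀ ρ0 : Matrix (Fin d) (Fin d) ℂ, ρ0.trace = 1 →
      ∑ x, ∑ y, PP ρ0 x y = 1 := by
    intro ρ0 h1
    rw [Finset.sum_congr rfl fun x _ => hPy ρ0 h1 x, hQn1]
  -- splitting sums over `Fin (m+k) → Y`
  have hsplit : ∀ (g : (Fin (m+k) → Y) → ℝ),
      ∑ y, g y = ∑ c : Fin m → Y, ∑ dy : Fin k → Y, g (Fin.append c dy) := by
    intro g
    rw [← Equiv.sum_comp (Fin.appendEquiv m k) g, Fintype.sum_prod_type]
    rfl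
  -- entropies
  set entJ : Matrix (Fin d) (Fin d) ℂ → ℝ :=
    fun ρ0 => ∑ x, ∑ y, Real.negMulLog (PP ρ0 x y) with hentJdef
  set entY : Matrix (Fin d) (Fin d) ℂ → ℝ :=
    fun ρ0 => ent (fun y => ∑ x, PP ρ0 x y) with hentYdef
  set uu : Matrix (Fin d) (Fin d) ℂ → (Fin (m+k) → X) → (Fin k → Y) → ℝ :=
    fun ρ0 x dy => ∑ c : Fin m → Y, PP ρ0 x (Fin.append c dy) with huudef
  set vv : Matrix (Fin d) (Fin d) ℂ → (Fin k → Y) → ℝ :=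
    fun ρ0 dy => ∑ x, uu ρ0 x dy with hvvdef
  set entU : Matrix (Fin d) (Fin d) ℂ → ℝ :=
    fun ρ0 => ∑ t : (Fin (m+k) → X) × (Fin k → Y), Real.negMulLog (uu ρ0 t.1 t.2)
    with hentUdef
  set entV : Matrix (Fin d) (Fin d) ℂ → ℝ :=
    fun ρ0 => ∑ dy : Fin k → Y, Real.negMulLog (vv ρ0 dy) with hentVdef
  -- mutual information decomposition
  have hMI : ∀ ρ0 : Matrix (Fin d) (Fin d) ℂ, ρ0.PosSemidef → ρ0.trace = 1 →
      mutInfo (PP ρ0) = ent (fun x : Fin (m+k) → X => ∏ ℓ, Q (x ℓ)) + entY ρ0 - entJ ρ0 := by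
    intro ρ0 hρ h1
    rw [mutInfo_eq_ent (PP ρ0) (hP0 ρ0 hρ)]
    have hx : (fun x : Fin (m+k) → X => ∑ y, PP ρ0 x y)
        = (fun x : Fin (m+k) → X => ∏ ℓ, Q (x ℓ)) := funext (hPy ρ0 h1)
    rw [hx]
  -- conditional-entropy bounds, J side
  have hJU : ∀ ρ0 : Matrix (Fin d) (Fin d) ℂ, ρ0.PosSemidef → ρ0.trace = 1 →
      entU ρ0 ≤ entJ ρ0 ∧ entJ ρ0 ≤ entU ρ0 + Real.log (Fintype.card (Fin m → Y)) := by
    intro ρ0 hρ h1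
    have hreidx : ∀ (F : ℝ → ℝ),
        ∑ t : (Fin (m+k) → X) × (Fin k → Y), ∑ c : Fin m → Y,
          F (PP ρ0 t.1 (Fin.append c t.2)) = ∑ x, ∑ y, F (PP ρ0 x y) := by
      intro F
      rw [Fintype.sum_prod_type]
      refine Finset.sum_congr rfl fun x _ => ?_
      rw [hsplit (fun y => F (PP ρ0 x y))]
      exact Finset.sum_comm
    have htot : ∑ t : (Fin (m+k) → X) × (Fin k → Y), ∑ c : Fin m → Y,
        PP ρ0 t.1 (Fin.append c t.2) = 1 := by
      have h := hreidx (fun z => z)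
      exact h.trans (hPtot ρ0 h1)
    constructor
    · have h := marg_ent_le
        (fun c (t : (Fin (m+k) → X) × (Fin k → Y)) => PP ρ0 t.1 (Fin.append c t.2))
        (fun c t => hP0 ρ0 hρ _ _)
      calc entU ρ0
          = ∑ t : (Fin (m+k) → X) × (Fin k → Y),
              Real.negMulLog (∑ c : Fin m → Y, PP ρ0 t.1 (Fin.append c t.2)) := rfl
        _ ≤ ∑ t : (Fin (m+k) → X) × (Fin k → Y), ∑ c : Fin m → Y,
              Real.negMulLog (PP ρ0 t.1 (Fin.append c t.2)) := h
        _ = entJ ρ0 := hreidx Real.negMulLog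
    · have h := joint_ent_le
        (fun c (t : (Fin (m+k) → X) × (Fin k → Y)) => PP ρ0 t.1 (Fin.append c t.2))
        (fun c t => hP0 ρ0 hρ _ _) htot
      calc entJ ρ0
          = ∑ t : (Fin (m+k) → X) × (Fin k → Y), ∑ c : Fin m → Y,
              Real.negMulLog (PP ρ0 t.1 (Fin.append c t.2)) := (hreidx Real.negMulLog).symm
        _ ≤ (∑ t : (Fin (m+k) → X) × (Fin k → Y),
              Real.negMulLog (∑ c : Fin m → Y, PP ρ0 t.1 (Fin.append c t.2)))
              + Real.log (Fintype.card (Fin m → Y)) := h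
        _ = entU ρ0 + Real.log (Fintype.card (Fin m → Y)) := rfl
  -- conditional-entropy bounds, Y side
  have hYV : ∀ ρ0 : Matrix (Fin d) (Fin d) ℂ, ρ0.PosSemidef → ρ0.trace = 1 →
      entV ρ0 ≤ entY ρ0 ∧ entY ρ0 ≤ entV ρ0 + Real.log (Fintype.card (Fin m → Y)) := by
    intro ρ0 hρ h1
    have hYsplit : entY ρ0 = ∑ dy : Fin k → Y, ∑ c : Fin m → Y,
        Real.negMulLog (∑ x, PP ρ0 x (Fin.append c dy)) := by
      show ∑ y : Fin (m+k) → Y, Real.negMulLog (∑ x, PP ρ0 x y) = _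
      rw [hsplit (fun y => Real.negMulLog (∑ x, PP ρ0 x y))]
      exact Finset.sum_comm
    have hswap : ∀ dy : Fin k → Y,
        vv ρ0 dy = ∑ c : Fin m → Y, ∑ x, PP ρ0 x (Fin.append c dy) := by
      intro dy
      show ∑ x, ∑ c : Fin m → Y, PP ρ0 x (Fin.append c dy) = _
      exact Finset.sum_comm
    have hVeq : entV ρ0 = ∑ dy : Fin k → Y,
        Real.negMulLog (∑ c : Fin m → Y, ∑ x, PP ρ0 x (Fin.append c dy)) := by
      show ∑ dy : Fin k → Y, Real.negMulLog (vv ρ0 dy) = _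
      exact Finset.sum_congr rfl fun dy _ => by rw [hswap dy]
    have htot : ∑ dy : Fin k → Y, ∑ c : Fin m → Y, ∑ x, PP ρ0 x (Fin.append c dy) = 1 := by
      have h := hsplit (fun y => ∑ x, PP ρ0 x y)
      calc ∑ dy : Fin k → Y, ∑ c : Fin m → Y, ∑ x, PP ρ0 x (Fin.append c dy)
          = ∑ c : Fin m → Y, ∑ dy : Fin k → Y, ∑ x, PP ρ0 x (Fin.append c dy) :=
            Finset.sum_comm
        _ = ∑ y : Fin (m+k) → Y, ∑ x, PP ρ0 x y := h.symm
        _ = ∑ x, ∑ y, PP ρ0 x y := Finset.sum_comm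
        _ = 1 := hPtot ρ0 h1
    have hnn : ∀ (c : Fin m → Y) (dy : Fin k → Y),
        0 ≤ ∑ x, PP ρ0 x (Fin.append c dy) :=
      fun c dy => Finset.sum_nonneg fun x _ => hP0 ρ0 hρ _ _
    constructor
    · have h := marg_ent_le
        (fun (c : Fin m → Y) (dy : Fin k → Y) => ∑ x, PP ρ0 x (Fin.append c dy)) hnn
      calc entV ρ0
          = ∑ dy : Fin k → Y,
              Real.negMulLog (∑ c : Fin m → Y, ∑ x, PP ρ0 x (Fin.append c dy)) := hVeq
        _ ≤ ∑ dy : Fin k → Y, ∑ c : Fin m → Y,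
              Real.negMulLog (∑ x, PP ρ0 x (Fin.append c dy)) := h
        _ = entY ρ0 := hYsplit.symm
    · have h := joint_ent_le
        (fun (c : Fin m → Y) (dy : Fin k → Y) => ∑ x, PP ρ0 x (Fin.append c dy)) hnn htot
      calc entY ρ0
          = ∑ dy : Fin k → Y, ∑ c : Fin m → Y,
              Real.negMulLog (∑ x, PP ρ0 x (Fin.append c dy)) := hYsplit
        _ ≤ (∑ dy : Fin k → Y,
              Real.negMulLog (∑ c : Fin m → Y, ∑ x, PP ρ0 x (Fin.append c dy)))
              + Real.log (Fintype.card (Fin m → Y)) := h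
        _ = entV ρ0 + Real.log (Fintype.card (Fin m → Y)) := by rw [hVeq]
  -- the key identity for the marginal on the tail
  have hUkey : ∀ ρ0 : Matrix (Fin d) (Fin d) ℂ, ∀ (x : Fin (m+k) → X) (dy : Fin k → Y),
      uu ρ0 x dy = (∏ ℓ, Q (x ℓ)) *
        ((evolve Nmap (∑ c : Fin m → Y, evolve Nmap ρ0 m (fun i => x (Fin.castAdd k i)) c)
          k (fun i => x (Fin.natAdd m i)) dy).trace).re := by
    intro ρ0 x dy
    have hstep : ∀ c : Fin m → Y,
        PP ρ0 x (Fin.append c dy)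
          = (∏ ℓ, Q (x ℓ)) *
            ((evolve Nmap (evolve Nmap ρ0 m (fun i => x (Fin.castAdd k i)) c)
              k (fun i => x (Fin.natAdd m i)) dy).trace).re := by
      intro c
      have hx : x = Fin.append (fun i => x (Fin.castAdd k i)) (fun i => x (Fin.natAdd m i)) :=
        Fin.append_castAdd_natAdd.symm
      have hev : evolve Nmap ρ0 (m+k) x (Fin.append c dy)
          = evolve Nmap (evolve Nmap ρ0 m (fun i => x (Fin.castAdd k i)) c) k
            (fun i => x (Fin.natAdd m i)) dy := by
        conv_lhs => rw [hx]
        exact evolve_append Nmap ρ0 m k _ _ c dy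
      show (∏ ℓ, Q (x ℓ)) * ((evolve Nmap ρ0 (m+k) x (Fin.append c dy)).trace).re = _
      rw [hev]
    show ∑ c : Fin m → Y, PP ρ0 x (Fin.append c dy) = _
    rw [Finset.sum_congr rfl fun c _ => hstep c, ← Finset.mul_sum, ← Complex.re_sum,
      ← Matrix.trace_sum, ← evolve_finset_sum Nmap hNadd hNzero]
  -- total-variation bound on `uu`
  have hΔherm : ∀ x1 : Fin m → X,
      ((∑ c : Fin m → Y, evolve Nmap α0 m x1 c)
        - ∑ c : Fin m → Y, evolve Nmap β0 m x1 c).IsHermitian := by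
    intro x1
    have h1 : (∑ c : Fin m → Y, evolve Nmap α0 m x1 c).PosSemidef :=
      psd_finset_sum _ _ fun c _ => evolve_psd Nmap hNpsd hα m x1 c
    have h2 : (∑ c : Fin m → Y, evolve Nmap β0 m x1 c).PosSemidef :=
      psd_finset_sum _ _ fun c _ => evolve_psd Nmap hNpsd hβ m x1 c
    exact h1.isHermitian.sub h2.isHermitian
  have hdux : ∀ x : Fin (m+k) → X,
      ∑ dy : Fin k → Y, |uu α0 x dy - uu β0 x dy| ≤ (∏ ℓ, Q (x ℓ)) * (2 * δ) := by
    intro x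
    set x1 : Fin m → X := fun i => x (Fin.castAdd k i) with hx1
    set x2 : Fin k → X := fun i => x (Fin.natAdd m i) with hx2
    set Δm : Matrix (Fin d) (Fin d) ℂ :=
      (∑ c : Fin m → Y, evolve Nmap α0 m x1 c) - ∑ c : Fin m → Y, evolve Nmap β0 m x1 c
      with hΔdef
    have hdiff : ∀ dy : Fin k → Y, uu α0 x dy - uu β0 x dy
        = (∏ ℓ, Q (x ℓ)) * ((evolve Nmap Δm k x2 dy).trace).re := by
      intro dy
      rw [hUkey α0 x dy, hUkey β0 x dy, hΔdef,
        evolve_sub Nmap hNsub _ _ k x2 dy, Matrix.trace_sub, Complex.sub_re]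
      ring
    calc ∑ dy : Fin k → Y, |uu α0 x dy - uu β0 x dy|
        = (∏ ℓ, Q (x ℓ)) * ∑ dy : Fin k → Y, |((evolve Nmap Δm k x2 dy).trace).re| := by
          rw [Finset.mul_sum]
          refine Finset.sum_congr rfl fun dy _ => ?_
          rw [hdiff dy, abs_mul, abs_of_nonneg (hQn0 x)]
      _ ≤ (∏ ℓ, Q (x ℓ)) * (2 * trNorm Δm) :=
          mul_le_mul_of_nonneg_left (tail_tv Nmap hNtr hNsub hNpsd Δm (hΔherm x1) k x2)
            (hQn0 x)
      _ ≤ (∏ ℓ, Q (x ℓ)) * (2 * δ) := by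
          refine mul_le_mul_of_nonneg_left ?_ (hQn0 x)
          have := hδ x1
          linarith
  set δu : ℝ := ∑ t : (Fin (m+k) → X) × (Fin k → Y), |uu α0 t.1 t.2 - uu β0 t.1 t.2|
    with hδudef
  have hδu0 : 0 ≤ δu := Finset.sum_nonneg fun t _ => abs_nonneg _
  have hδu : δu ≤ 2 * δ := by
    calc δu = ∑ x : Fin (m+k) → X, ∑ dy : Fin k → Y, |uu α0 x dy - uu β0 x dy| :=
          Fintype.sum_prod_type
            (fun t : (Fin (m+k) → X) × (Fin k → Y) => |uu α0 t.1 t.2 - uu β0 t.1 t.2|)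
      _ ≤ ∑ x : Fin (m+k) → X, (∏ ℓ, Q (x ℓ)) * (2 * δ) :=
          Finset.sum_le_sum fun x _ => hdux x
      _ = 2 * δ := by rw [← Finset.sum_mul, hQn1, one_mul]
  set δv : ℝ := ∑ dy : Fin k → Y, |vv α0 dy - vv β0 dy| with hδvdef
  have hδv0 : 0 ≤ δv := Finset.sum_nonneg fun t _ => abs_nonneg _
  have hδv : δv ≤ δu := by
    calc δv ≤ ∑ dy : Fin k → Y, ∑ x : Fin (m+k) → X, |uu α0 x dy - uu β0 x dy| := by
          refine Finset.sum_le_sum fun dy _ => ?_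
          calc |vv α0 dy - vv β0 dy|
              = |∑ x : Fin (m+k) → X, (uu α0 x dy - uu β0 x dy)| := by
                rw [Finset.sum_sub_distrib]
            _ ≤ ∑ x : Fin (m+k) → X, |uu α0 x dy - uu β0 x dy| :=
                Finset.abs_sum_le_sum_abs _ _
      _ = ∑ x : Fin (m+k) → X, ∑ dy : Fin k → Y, |uu α0 x dy - uu β0 x dy| :=
          Finset.sum_comm
      _ = δu := (Fintype.sum_prod_type
            (fun t : (Fin (m+k) → X) × (Fin k → Y) => |uu α0 t.1 t.2 - uu β0 t.1 t.2|)).symm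
  have hδvδ : δv ≤ 2 * δ := le_trans hδv hδu
  -- sums of uu and vv are 1
  have huutot : ∀ ρ0 : Matrix (Fin d) (Fin d) ℂ, ρ0.trace = 1 →
      ∑ t : (Fin (m+k) → X) × (Fin k → Y), uu ρ0 t.1 t.2 = 1 := by
    intro ρ0 h1
    have hx : ∀ x : Fin (m+k) → X, ∑ dy : Fin k → Y, uu ρ0 x dy = ∑ y, PP ρ0 x y := by
      intro x
      rw [hsplit (fun y => PP ρ0 x y)]
      exact Finset.sum_comm
    calc ∑ t : (Fin (m+k) → X) × (Fin k → Y), uu ρ0 t.1 t.2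
        = ∑ x : Fin (m+k) → X, ∑ dy : Fin k → Y, uu ρ0 x dy :=
          Fintype.sum_prod_type (fun t : (Fin (m+k) → X) × (Fin k → Y) => uu ρ0 t.1 t.2)
      _ = ∑ x, ∑ y, PP ρ0 x y := Finset.sum_congr rfl fun x _ => hx x
      _ = 1 := hPtot ρ0 h1
  have hvvtot : ∀ ρ0 : Matrix (Fin d) (Fin d) ℂ, ρ0.trace = 1 →
      ∑ dy : Fin k → Y, vv ρ0 dy = 1 := by
    intro ρ0 h1
    calc ∑ dy : Fin k → Y, vv ρ0 dy
        = ∑ dy : Fin k → Y, ∑ x : Fin (m+k) → X, uu ρ0 x dy := rfl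
      _ = ∑ x : Fin (m+k) → X, ∑ dy : Fin k → Y, uu ρ0 x dy := Finset.sum_comm
      _ = ∑ t : (Fin (m+k) → X) × (Fin k → Y), uu ρ0 t.1 t.2 :=
          (Fintype.sum_prod_type (fun t : (Fin (m+k) → X) × (Fin k → Y) => uu ρ0 t.1 t.2)).symm
      _ = 1 := huutot ρ0 h1
  -- Fannes bounds
  have hc1 : (1:ℝ) ≤ (Fintype.card X : ℝ) := by exact_mod_cast Fintype.card_pos
  have hc2 : (1:ℝ) ≤ (Fintype.card Y : ℝ) := by exact_mod_cast Fintype.card_pos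
  set L : ℝ := Real.log (Fintype.card X * Fintype.card Y) with hLdef
  have hL0 : 0 ≤ L := by
    rw [hLdef]
    refine Real.log_nonneg ?_
    push_cast
    nlinarith
  have hlogU : Real.log (Fintype.card ((Fin (m+k) → X) × (Fin k → Y))) ≤ (m + k) * L := by
    rw [Fintype.card_prod, Fintype.card_fun, Fintype.card_fun, Fintype.card_fin,
      Fintype.card_fin]
    have hle : Fintype.card X ^ (m+k) * Fintype.card Y ^ k
        ≤ (Fintype.card X * Fintype.card Y) ^ (m+k) := by
      rw [mul_pow]
      exact Nat.mul_le_mul_left _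
        (Nat.pow_le_pow_right Fintype.card_pos (by omega))
    calc Real.log ((Fintype.card X ^ (m+k) * Fintype.card Y ^ k : ℕ) : ℝ)
        ≤ Real.log (((Fintype.card X * Fintype.card Y) ^ (m+k) : ℕ) : ℝ) := by
          refine Real.log_le_log ?_ ?_
          · positivity
          · exact_mod_cast hle
      _ = (m + k) * L := by
          rw [hLdef]
          push_cast
          rw [Real.log_pow]
          push_cast
          ring
  have hlogV : Real.log (Fintype.card (Fin k → Y)) ≤ (m + k) * L := by
    rw [Fintype.card_fun, Fintype.card_fin]
    have hle : Fintype.card Y ^ k ≤ (Fintype.card X * Fintype.card Y) ^ (m+k) := by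
      calc Fintype.card Y ^ k ≤ Fintype.card Y ^ (m+k) :=
            Nat.pow_le_pow_right Fintype.card_pos (by omega)
        _ ≤ (Fintype.card X * Fintype.card Y) ^ (m+k) :=
            Nat.pow_le_pow_left (Nat.le_mul_of_pos_left _ Fintype.card_pos) _
    calc Real.log ((Fintype.card Y ^ k : ℕ) : ℝ)
        ≤ Real.log (((Fintype.card X * Fintype.card Y) ^ (m+k) : ℕ) : ℝ) := by
          refine Real.log_le_log ?_ ?_
          · positivity
          · exact_mod_cast hle
      _ = (m + k) * L := by
          rw [hLdef]
          push_cast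
          rw [Real.log_pow]
          push_cast
          ring
  have hFU : |entU α0 - entU β0| ≤ 2 * δ * ((m+k) * L) + 2 * Real.sqrt (2*δ) + 2*δ := by
    have h := fannes (fun t : (Fin (m+k) → X) × (Fin k → Y) => uu α0 t.1 t.2)
      (fun t => uu β0 t.1 t.2)
      (fun t => Finset.sum_nonneg fun c _ => hP0 α0 hα _ _)
      (huutot α0 hα1)
      (fun t => Finset.sum_nonneg fun c _ => hP0 β0 hβ _ _)
      (huutot β0 hβ1)
    rw [← hδudef] at h
    have hlog0 : 0 ≤ Real.log (Fintype.card ((Fin (m+k) → X) × (Fin k → Y))) := by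
      refine Real.log_nonneg ?_
      have h' : 0 < Fintype.card ((Fin (m+k) → X) × (Fin k → Y)) := Fintype.card_pos
      exact_mod_cast h'
    have hb1 : δu * Real.log (Fintype.card ((Fin (m+k) → X) × (Fin k → Y)))
        ≤ 2 * δ * ((m+k) * L) := by
      calc δu * Real.log (Fintype.card ((Fin (m+k) → X) × (Fin k → Y)))
          ≤ (2*δ) * Real.log (Fintype.card ((Fin (m+k) → X) × (Fin k → Y))) :=
            mul_le_mul_of_nonneg_right hδu hlog0
        _ ≤ (2*δ) * ((m+k) * L) := mul_le_mul_of_nonneg_left hlogU (by linarith)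
        _ = 2 * δ * ((m+k) * L) := by ring
    have hb2 : Real.sqrt δu ≤ Real.sqrt (2*δ) := Real.sqrt_le_sqrt hδu
    calc |entU α0 - entU β0|
        ≤ δu * Real.log (Fintype.card ((Fin (m+k) → X) × (Fin k → Y)))
            + 2 * Real.sqrt δu + δu := h
      _ ≤ 2 * δ * ((m+k) * L) + 2 * Real.sqrt (2*δ) + 2*δ := by linarith
  have hFV : |entV α0 - entV β0| ≤ 2 * δ * ((m+k) * L) + 2 * Real.sqrt (2*δ) + 2*δ := by
    have h := fannes (fun dy : Fin k → Y => vv α0 dy) (fun dy => vv β0 dy)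
      (fun dy => Finset.sum_nonneg fun x _ => Finset.sum_nonneg fun c _ => hP0 α0 hα _ _)
      (hvvtot α0 hα1)
      (fun dy => Finset.sum_nonneg fun x _ => Finset.sum_nonneg fun c _ => hP0 β0 hβ _ _)
      (hvvtot β0 hβ1)
    rw [← hδvdef] at h
    have hlog0 : 0 ≤ Real.log (Fintype.card (Fin k → Y)) := by
      refine Real.log_nonneg ?_
      have h' : 0 < Fintype.card (Fin k → Y) := Fintype.card_pos
      exact_mod_cast h'
    have hb1 : δv * Real.log (Fintype.card (Fin k → Y)) ≤ 2 * δ * ((m+k) * L) := by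
      calc δv * Real.log (Fintype.card (Fin k → Y))
          ≤ (2*δ) * Real.log (Fintype.card (Fin k → Y)) :=
            mul_le_mul_of_nonneg_right hδvδ hlog0
        _ ≤ (2*δ) * ((m+k) * L) := mul_le_mul_of_nonneg_left hlogV (by linarith)
        _ = 2 * δ * ((m+k) * L) := by ring
    have hb2 : Real.sqrt δv ≤ Real.sqrt (2*δ) := Real.sqrt_le_sqrt hδvδ
    calc |entV α0 - entV β0|
        ≤ δv * Real.log (Fintype.card (Fin k → Y)) + 2 * Real.sqrt δv + δv := h
      _ ≤ 2 * δ * ((m+k) * L) + 2 * Real.sqrt (2*δ) + 2*δ := by linarith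
  -- put everything together
  have hB1 : (0:ℝ) ≤ Real.log (Fintype.card (Fin m → Y)) := by
    refine Real.log_nonneg ?_
    have h' : 0 < Fintype.card (Fin m → Y) := Fintype.card_pos
    exact_mod_cast h'
  obtain ⟨hJUα1, hJUα2⟩ := hJU α0 hα hα1
  obtain ⟨hJUβ1, hJUβ2⟩ := hJU β0 hβ hβ1
  obtain ⟨hYVα1, hYVα2⟩ := hYV α0 hα hα1
  obtain ⟨hYVβ1, hYVβ2⟩ := hYV β0 hβ hβ1
  have hgoal : (mutInfo fun (x : Fin (m+k) → X) (y : Fin (m+k) → Y) =>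
        (∏ ℓ, Q (x ℓ)) * ((evolve Nmap α0 (m+k) x y).trace).re)
      - (mutInfo fun (x : Fin (m+k) → X) (y : Fin (m+k) → Y) =>
        (∏ ℓ, Q (x ℓ)) * ((evolve Nmap β0 (m+k) x y).trace).re)
      = (entY α0 - entJ α0) - (entY β0 - entJ β0) := by
    have h1 := hMI α0 hα hα1
    have h2 := hMI β0 hβ hβ1
    have e1 : (mutInfo fun (x : Fin (m+k) → X) (y : Fin (m+k) → Y) =>
        (∏ ℓ, Q (x ℓ)) * ((evolve Nmap α0 (m+k) x y).trace).re) = mutInfo (PP α0) := rfl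
    have e2 : (mutInfo fun (x : Fin (m+k) → X) (y : Fin (m+k) → Y) =>
        (∏ ℓ, Q (x ℓ)) * ((evolve Nmap β0 (m+k) x y).trace).re) = mutInfo (PP β0) := rfl
    rw [e1, e2, h1, h2]
    ring
  rw [hgoal]
  obtain ⟨hFU1, hFU2⟩ := abs_le.mp hFU
  obtain ⟨hFV1, hFV2⟩ := abs_le.mp hFV
  rw [abs_le]
  constructor
  · linarith
  · linarith

end Main
/-- The information rate of an indecomposable CC-QSC with an i.i.d. input process is
asymptotically independent of the initial density operator: for any two initial density
matrices `α₀, β₀`, the difference of the normalized mutual informations `I⁽ⁿ⁾(α₀) − I⁽ⁿ⁾(β₀)`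
tends to `0` as `n → ∞`. -/
theorem stmt18 {X Y : Type} [Fintype X] [Fintype Y] [DecidableEq X] [DecidableEq Y]
    (d : ℕ) (κ : X → Y → Type) [∀ x y, Fintype (κ x y)]
    (Fk : ∀ (x : X) (y : Y), κ x y → Matrix (Fin d) (Fin d) ℂ)
    (hnorm : ∀ x : X, ∑ y : Y, ∑ k : κ x y, (Fk x y k)ᴴ * Fk x y k = 1)
    (Q : X → ℝ) (hQ0 : ∀ x, 0 ≤ Q x) (hQ1 : ∑ x : X, Q x = 1)
    (hind : ∀ α0 β0 : Matrix (Fin d) (Fin d) ℂ,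
      α0.PosSemidef → α0.trace = 1 → β0.PosSemidef → β0.trace = 1 →
      ∀ ε : ℝ, 0 < ε → ∃ N : ℕ, ∀ n : ℕ, N ≤ n → ∀ x : Fin n → X,
        trNorm
          ((∑ y : Fin n → Y,
              evolve (fun x' y' ρ' => ∑ k : κ x' y', Fk x' y' k * ρ' * (Fk x' y' k)ᴴ)
                α0 n x y)
            - ∑ y : Fin n → Y,
                evolve (fun x' y' ρ' => ∑ k : κ x' y', Fk x' y' k * ρ' * (Fk x' y' k)ᴴ)
                  β0 n x y) < ε) :
    ∀ α0 β0 : Matrix (Fin d) (Fin d) ℂ,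
      α0.PosSemidef → α0.trace = 1 → β0.PosSemidef → β0.trace = 1 →
      Filter.Tendsto
        (fun n : ℕ =>
          (1 / (n : ℝ)) * mutInfo (fun (x : Fin n → X) (y : Fin n → Y) =>
            (∏ ℓ : Fin n, Q (x ℓ)) *
              ((evolve (fun x' y' ρ' => ∑ k : κ x' y', Fk x' y' k * ρ' * (Fk x' y' k)ᴴ)
                  α0 n x y).trace).re)
          - (1 / (n : ℝ)) * mutInfo (fun (x : Fin n → X) (y : Fin n → Y) =>
              (∏ ℓ : Fin n, Q (x ℓ)) *
                ((evolve (fun x' y' ρ' => ∑ k : κ x' y', Fk x' y' k * ρ' * (Fk x' y' k)ᴴ)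
                    β0 n x y).trace).re))
        Filter.atTop (nhds 0) := by
  classical
  intro α0 β0 hα hα1 hβ hβ1
  set Nmap : X → Y → Matrix (Fin d) (Fin d) ℂ → Matrix (Fin d) (Fin d) ℂ :=
    fun x' y' ρ' => ∑ k : κ x' y', Fk x' y' k * ρ' * (Fk x' y' k)ᴴ with hNmap
  -- degenerate case d = 0
  rcases Nat.eq_zero_or_pos d with hd | hd
  · exfalso
    subst hd
    rw [Matrix.trace] at hα1
    simp at hα1
  -- nonemptiness
  have hXne : Nonempty X := by
    by_contra h
    rw [not_nonempty_iff] at h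
    simp at hQ1
  have hYne : Nonempty Y := by
    by_contra h
    rw [not_nonempty_iff] at h
    obtain ⟨x⟩ := hXne
    have h0 := hnorm x
    rw [Finset.univ_eq_empty, Finset.sum_empty] at h0
    have := congrArg Matrix.trace h0
    rw [Matrix.trace_zero, Matrix.trace_one] at this
    have hd' : (d : ℂ) = 0 := by simpa using this.symm
    have : d = 0 := by exact_mod_cast hd'
    omega
  -- Kraus map properties
  have hNadd : ∀ x y ρ ρ', Nmap x y (ρ + ρ') = Nmap x y ρ + Nmap x y ρ' := by
    intro x y ρ ρ'
    rw [hNmap]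
    simp only [Matrix.mul_add, Matrix.add_mul]
    rw [Finset.sum_add_distrib]
  have hNzero : ∀ x y, Nmap x y 0 = 0 := by
    intro x y
    rw [hNmap]
    simp
  have hNsub : ∀ x y ρ ρ', Nmap x y (ρ - ρ') = Nmap x y ρ - Nmap x y ρ' := by
    intro x y ρ ρ'
    rw [hNmap]
    simp only [Matrix.mul_sub, Matrix.sub_mul]
    rw [Finset.sum_sub_distrib]
  have hNpsd : ∀ x y ρ, ρ.PosSemidef → (Nmap x y ρ).PosSemidef := by
    intro x y ρ hρ
    rw [hNmap]
    exact psd_finset_sum _ _ fun kk _ => hρ.mul_mul_conjTranspose_same (Fk x y kk)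
  have hNtr : ∀ x ρ, ∑ y : Y, (Nmap x y ρ).trace = ρ.trace := by
    intro x ρ
    rw [hNmap]
    simp only [Matrix.trace_sum]
    calc ∑ y : Y, ∑ kk : κ x y, (Fk x y kk * ρ * (Fk x y kk)ᴴ).trace
        = ∑ y : Y, ∑ kk : κ x y, ((Fk x y kk)ᴴ * Fk x y kk * ρ).trace := by
          refine Finset.sum_congr rfl fun y _ => Finset.sum_congr rfl fun kk _ => ?_
          rw [Matrix.trace_mul_cycle]
      _ = ((∑ y : Y, ∑ kk : κ x y, (Fk x y kk)ᴴ * Fk x y kk) * ρ).trace := by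
          rw [Matrix.sum_mul, Matrix.trace_sum]
          refine Finset.sum_congr rfl fun y _ => ?_
          rw [Matrix.sum_mul, Matrix.trace_sum]
      _ = ρ.trace := by rw [hnorm x, Matrix.one_mul]
  -- now the limit argument
  rw [Metric.tendsto_atTop]
  intro ε hε
  set L : ℝ := Real.log (Fintype.card X * Fintype.card Y) with hLdef
  have hL0 : 0 ≤ L := by
    rw [hLdef]
    refine Real.log_nonneg ?_
    have h1 : (1:ℝ) ≤ (Fintype.card X : ℝ) := by exact_mod_cast Fintype.card_pos
    have h2 : (1:ℝ) ≤ (Fintype.card Y : ℝ) := by exact_mod_cast Fintype.card_pos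
    push_cast
    nlinarith
  set ε0 : ℝ := min (ε / (16 * (L + 1))) 1 with hε0def
  have hε0pos : 0 < ε0 := by
    rw [hε0def]
    refine lt_min ?_ (by norm_num)
    positivity
  have hε0L : 4 * ε0 * L ≤ ε / 4 := by
    have h1 : ε0 ≤ ε / (16 * (L + 1)) := min_le_left _ _
    have h2 : ε0 * L ≤ (ε / (16 * (L + 1))) * L := mul_le_mul_of_nonneg_right h1 hL0
    have h3 : (ε / (16 * (L + 1))) * L ≤ ε / 16 := by
      rw [div_mul_eq_mul_div, div_le_div_iff₀ (by positivity) (by norm_num)]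
      nlinarith
    linarith
  obtain ⟨m, hm⟩ := hind α0 β0 hα hα1 hβ hβ1 ε0 hε0pos
  set C : ℝ := 4 * Real.log (Fintype.card (Fin m → Y)) + 4 * Real.sqrt (2 * ε0) + 4 * ε0
    with hCdef
  have hC0 : 0 ≤ C := by
    rw [hCdef]
    have hB1 : (0:ℝ) ≤ Real.log (Fintype.card (Fin m → Y)) := by
      refine Real.log_nonneg ?_
      have h' : 0 < Fintype.card (Fin m → Y) := Fintype.card_pos
      exact_mod_cast h'
    have := Real.sqrt_nonneg (2 * ε0)
    linarith
  obtain ⟨N1, hN1⟩ := exists_nat_gt (2 * C / ε)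
  refine ⟨max m (max N1 1), fun n hn => ?_⟩
  have hnm : m ≤ n := le_trans (le_max_left _ _) hn
  have hnN1 : N1 ≤ n := le_trans (le_trans (le_max_left _ _) (le_max_right _ _)) hn
  have hn1 : 1 ≤ n := le_trans (le_trans (le_max_right _ _) (le_max_right _ _)) hn
  obtain ⟨k, rfl⟩ : ∃ k, n = m + k := ⟨n - m, by omega⟩
  have hδm : ∀ x1 : Fin m → X,
      trNorm ((∑ c : Fin m → Y, evolve Nmap α0 m x1 c)
        - ∑ c : Fin m → Y, evolve Nmap β0 m x1 c) ≤ ε0 :=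
    fun x1 => le_of_lt (hm m le_rfl x1)
  have hbound := main_bound Nmap hNadd hNzero hNsub hNpsd hNtr Q hQ0 hQ1 hYne
    α0 β0 hα hα1 hβ hβ1 m k ε0 (le_of_lt hε0pos) hδm
  set n' : ℝ := ((m + k : ℕ) : ℝ) with hn'def
  have hn'1 : 1 ≤ n' := by
    rw [hn'def]
    exact_mod_cast hn1
  have hn'0 : 0 < n' := lt_of_lt_of_le one_pos hn'1
  have hmk : (m : ℝ) + (k : ℝ) = n' := by
    rw [hn'def]
    push_cast
    ring
  set Iα : ℝ := mutInfo (fun (x : Fin (m+k) → X) (y : Fin (m+k) → Y) =>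
    (∏ ℓ, Q (x ℓ)) * ((evolve Nmap α0 (m+k) x y).trace).re) with hIαdef
  set Iβ : ℝ := mutInfo (fun (x : Fin (m+k) → X) (y : Fin (m+k) → Y) =>
    (∏ ℓ, Q (x ℓ)) * ((evolve Nmap β0 (m+k) x y).trace).re) with hIβdef
  have habs : |Iα - Iβ| ≤ C + 4 * ε0 * (n' * L) := by
    rw [hCdef]
    calc |Iα - Iβ| ≤ 4 * Real.log (Fintype.card (Fin m → Y))
          + 4 * ε0 * (((m:ℝ) + (k:ℝ)) * L) + 4 * Real.sqrt (2 * ε0) + 4 * ε0 := hbound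
      _ = 4 * Real.log (Fintype.card (Fin m → Y)) + 4 * Real.sqrt (2 * ε0) + 4 * ε0
          + 4 * ε0 * (n' * L) := by rw [hmk]; ring
  have hgoal : dist ((1 / n') * Iα - (1 / n') * Iβ) 0 < ε := by
    rw [Real.dist_eq, sub_zero, ← mul_sub, abs_mul, abs_of_nonneg (by positivity :
      (0:ℝ) ≤ 1 / n')]
    have hstep : (1 / n') * |Iα - Iβ| ≤ (1 / n') * (C + 4 * ε0 * (n' * L)) :=
      mul_le_mul_of_nonneg_left habs (by positivity)
    have heq : (1 / n') * (C + 4 * ε0 * (n' * L)) = C / n' + 4 * ε0 * L := by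
      field_simp
    have hCn : C / n' < ε / 2 := by
      rw [div_lt_iff₀ hn'0]
      have h2C : 2 * C < n' * ε := by
        have h' : 2 * C / ε < n' := by
          calc 2 * C / ε < (N1 : ℝ) := hN1
            _ ≤ n' := by
                rw [hn'def]
                exact_mod_cast hnN1
        rw [div_lt_iff₀ hε] at h'
        linarith
      linarith
    calc (1 / n') * |Iα - Iβ| ≤ C / n' + 4 * ε0 * L := by rw [← heq]; exact hstep
      _ < ε / 2 + ε / 4 := by
          have := hε0L
          linarith
      _ < ε := by linarith
  exact hgoal
end
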